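/- arXiv:0904.0924 — 9 statements merged into one kernel-verified Lean document; each statement's English description precedes it below -/
import Mathlib

section
/- Let L be a finite-dimensional Lie A-algebra over a field F. If B and C are abelian ideals of L, then [B, C] = 0. -/
/-- A finite-dimensional Lie algebra is an `A`-algebra if every nilpotent
subalgebra is abelian. -/
def IsAAlgebra (F L : Type*) [Field F] [LieRing L] [LieAlgebra F L] : Prop :=
  ∀ U : LieSubalgebra F L, LieRing.IsNilpotent U → IsLieAbelian U

theorem abelian_ideals_commute (F L : Type*) [Field F] [LieRing L] [LieAlgebra F L]
    [FiniteDimensional F L] (hA : IsAAlgebra F L)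
    (B C : LieIdeal F L) (hB : IsLieAbelian B) (hC : IsLieAbelian C) :
    ⁅B, C⁆ = (⊥ : LieIdeal F L) := by
  -- abelian brackets vanish
  have hBB : ∀ x ∈ B, ∀ y ∈ B, ⁅x, y⁆ = 0 := fun x hx y hy => by
    have := trivial_lie_zero _ _ (⟨x, hx⟩ : B) (⟨y, hy⟩ : B)
    exact congrArg Subtype.val this
  have hCC : ∀ x ∈ C, ∀ y ∈ C, ⁅x, y⁆ = 0 := fun x hx y hy => by
    have := trivial_lie_zero _ _ (⟨x, hx⟩ : C) (⟨y, hy⟩ : C)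
    exact congrArg Subtype.val this
  -- Step 1: elements of B ⊓ C are central in B ⊔ C
  have hcentral : ∀ z, z ∈ B → z ∈ C → ∀ y ∈ B ⊔ C, ⁅y, z⁆ = (0 : L) := by
    intro z hzB hzC y hy
    obtain ⟨b, hb, c, hc, rfl⟩ := (LieSubmodule.mem_sup _ _ _).mp hy
    rw [add_lie, hBB b hb z hzB, hCC c hc z hzC, add_zero]
  -- Step 2: brackets of elements of B ⊔ C land in B ⊓ C
  have hbr : ∀ y ∈ B ⊔ C, ∀ z ∈ B ⊔ C, ⁅y, z⁆ ∈ B ∧ ⁅y, z⁆ ∈ C := by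
    intro y hy z hz
    obtain ⟨b, hb, c, hc, rfl⟩ := (LieSubmodule.mem_sup _ _ _).mp hy
    obtain ⟨b', hb', c', hc', rfl⟩ := (LieSubmodule.mem_sup _ _ _).mp hz
    have e : ⁅b + c, b' + c'⁆ = ⁅b, c'⁆ + ⁅c, b'⁆ := by
      rw [add_lie, lie_add, lie_add, hBB b hb b' hb', hCC c hc c' hc']
      abel
    rw [e]
    constructor
    · exact add_mem (lie_mem_left F L B b c' hb) (lie_mem_right F L B c b' hb')
    · exact add_mem (lie_mem_right F L C b c' hc') (lie_mem_left F L C c b' hc)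
  -- The subalgebra U = B ⊔ C
  set U : LieSubalgebra F L := ((B ⊔ C : LieIdeal F L) : LieSubalgebra F L) with hU
  have hmemU : ∀ x : L, x ∈ U ↔ x ∈ B ⊔ C := fun x => Iff.rfl
  -- the submodule of U of elements whose value lies in B ⊓ C
  let P : LieSubmodule F U U :=
    { carrier := {m : U | (m : L) ∈ B ∧ (m : L) ∈ C}
      add_mem' := fun hx hy => ⟨add_mem hx.1 hy.1, add_mem hx.2 hy.2⟩
      zero_mem' := ⟨zero_mem _, zero_mem _⟩
      smul_mem' := fun t x hx => ⟨Submodule.smul_mem _ t hx.1, Submodule.smul_mem _ t hx.2⟩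
      lie_mem := fun {x m} hm => ⟨lie_mem_right F L B x m hm.1, lie_mem_right F L C x m hm.2⟩ }
  have hPmem : ∀ m : U, m ∈ P ↔ (m : L) ∈ B ∧ (m : L) ∈ C := fun m => Iff.rfl
  -- ⁅⊤, ⊤⁆ ≤ P
  have hlcs1 : (⁅(⊤ : LieIdeal F U), (⊤ : LieSubmodule F U U)⁆ : LieSubmodule F U U) ≤ P := by
    rw [LieSubmodule.lieIdeal_oper_eq_span, LieSubmodule.lieSpan_le]
    rintro m ⟨⟨x, -⟩, ⟨z, -⟩, rfl⟩
    exact hbr _ x.2 _ z.2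
  -- U is nilpotent
  have hnil : LieRing.IsNilpotent U := by
    refine (LieModule.isNilpotent_iff F U U).mpr ?_
    refine ⟨2, ?_⟩
    have h2 : LieModule.lowerCentralSeries F U U 2 =
        ⁅(⊤ : LieIdeal F U), ⁅(⊤ : LieIdeal F U), (⊤ : LieSubmodule F U U)⁆⁆ := by
      rw [LieModule.lowerCentralSeries_succ, LieModule.lowerCentralSeries_succ,
        LieModule.lowerCentralSeries_zero]
    rw [h2, LieSubmodule.lie_eq_bot_iff]
    intro x _ m hm
    have hmP := hlcs1 hm
    exact Subtype.ext (hcentral _ hmP.1 hmP.2 _ x.2)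
  -- apply the A-algebra hypothesis
  have habU : IsLieAbelian U := hA U hnil
  rw [LieSubmodule.lie_eq_bot_iff]
  intro x hx m hm
  have hxU : x ∈ U := (hmemU x).mpr (LieSubmodule.mem_sup _ _ _ |>.mpr ⟨x, hx, 0, zero_mem _, add_zero x⟩)
  have hmU : m ∈ U := (hmemU m).mpr (LieSubmodule.mem_sup _ _ _ |>.mpr ⟨0, zero_mem _, m, hm, zero_add m⟩)
  have := trivial_lie_zero _ _ (⟨x, hxU⟩ : U) (⟨m, hmU⟩ : U)
  exact congrArg Subtype.val this
end

section
/- Let L be a finite-dimensional solvable Lie A-algebra over a field F. Then L splits over each term of its derived series: for every i ≥ 0 there exists a Lie subalgebra B of L such that L^(i) ∩ B = 0 and L^(i) + B = L. -/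
open Module (finrank)

namespace AAlgAux

variable {F L : Type*} [Field F] [LieRing L] [LieAlgebra F L]

/-- The linear span of brackets of elements of two submodules. -/
def bk (P Q : Submodule F L) : Submodule F L :=
  Submodule.span F {z | ∃ x ∈ P, ∃ y ∈ Q, ⁅x, y⁆ = z}

lemma mem_bk {P Q : Submodule F L} {x y : L} (hx : x ∈ P) (hy : y ∈ Q) :
    ⁅x, y⁆ ∈ bk P Q :=
  Submodule.subset_span ⟨x, hx, y, hy, rfl⟩

lemma bk_le {P Q R : Submodule F L} (h : ∀ x ∈ P, ∀ y ∈ Q, ⁅x, y⁆ ∈ R) :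
    bk P Q ≤ R := by
  rw [bk, Submodule.span_le]
  rintro z ⟨x, hx, y, hy, rfl⟩
  exact h x hx y hy

lemma bk_mono {P P' Q Q' : Submodule F L} (h1 : P ≤ P') (h2 : Q ≤ Q') :
    bk P Q ≤ bk P' Q' :=
  bk_le fun x hx y hy => mem_bk (h1 hx) (h2 hy)

lemma bk_comm (P Q : Submodule F L) : bk P Q = bk Q P := by
  have h : ∀ (P Q : Submodule F L), bk P Q ≤ bk Q P := by
    intro P Q
    refine bk_le fun x hx y hy => ?_
    have : ⁅x, y⁆ = -⁅y, x⁆ := by rw [← lie_skew]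
    rw [this]
    exact neg_mem (mem_bk hy hx)
  exact le_antisymm (h P Q) (h Q P)

lemma bk_sup_sup (P Q : Submodule F L) :
    bk (P ⊔ Q) (P ⊔ Q) ≤ (bk P P ⊔ bk P Q) ⊔ (bk Q P ⊔ bk Q Q) := by
  refine bk_le fun x hx y hy => ?_
  obtain ⟨a, ha, b, hb, rfl⟩ := Submodule.mem_sup.mp hx
  obtain ⟨c, hc, d, hd, rfl⟩ := Submodule.mem_sup.mp hy
  rw [add_lie, lie_add, lie_add]
  refine add_mem (add_mem ?_ ?_) (add_mem ?_ ?_)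
  · exact Submodule.mem_sup_left (Submodule.mem_sup_left (mem_bk ha hc))
  · exact Submodule.mem_sup_left (Submodule.mem_sup_right (mem_bk ha hd))
  · exact Submodule.mem_sup_right (Submodule.mem_sup_left (mem_bk hb hc))
  · exact Submodule.mem_sup_right (Submodule.mem_sup_right (mem_bk hb hd))

/-- Ambient derived series of a submodule. -/
def DS (P : Submodule F L) : ℕ → Submodule F L
  | 0 => P
  | (i + 1) => bk (DS P i) (DS P i)

@[simp] lemma DS_zero (P : Submodule F L) : DS P 0 = P := rfl

lemma DS_succ (P : Submodule F L) (i : ℕ) : DS P (i + 1) = bk (DS P i) (DS P i) := rfl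

lemma DS_mono_left {P Q : Submodule F L} (h : P ≤ Q) (i : ℕ) : DS P i ≤ DS Q i := by
  induction i with
  | zero => exact h
  | succ i ih => exact bk_mono ih ih

lemma DS_succ_le {P : Submodule F L} (hP : bk P P ≤ P) : ∀ i, DS P (i + 1) ≤ DS P i := by
  intro i
  induction i with
  | zero => exact hP
  | succ i ih => exact bk_mono ih ih

lemma DS_le_self {P : Submodule F L} (hP : bk P P ≤ P) (i : ℕ) : DS P i ≤ P := by
  induction i with
  | zero => exact le_rfl
  | succ i ih => exact (DS_succ_le hP i).trans ih

lemma DS_antitone {P : Submodule F L} (hP : bk P P ≤ P) {i j : ℕ} (h : i ≤ j) :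
    DS P j ≤ DS P i := by
  induction j with
  | zero => simp_all
  | succ j ih =>
    rcases Nat.lt_or_ge i (j+1) with hc | hc
    · exact (DS_succ_le hP j).trans (ih (Nat.lt_succ_iff.mp hc))
    · have : i = j + 1 := le_antisymm h hc
      rw [this]

lemma DS_closed {P : Submodule F L} (hP : bk P P ≤ P) (i : ℕ) :
    bk (DS P i) (DS P i) ≤ DS P i := by
  cases i with
  | zero => exact hP
  | succ i => exact DS_succ_le hP (i + 1)

/-- Each term of the ambient derived series is an "ideal" of `P`. -/
lemma bk_DS_le {P : Submodule F L} (hP : bk P P ≤ P) : ∀ i, bk P (DS P i) ≤ DS P i := by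
  intro i
  induction i with
  | zero => exact hP
  | succ i ih =>
    refine bk_le fun s hs w hw => ?_
    induction hw using Submodule.span_induction with
    | mem z hz =>
      obtain ⟨a, ha, b, hb, rfl⟩ := hz
      rw [leibniz_lie]
      exact add_mem (mem_bk (ih (mem_bk hs ha)) hb) (mem_bk ha (ih (mem_bk hs hb)))
    | zero => simp
    | add u v _ _ hu hv => rw [lie_add]; exact add_mem hu hv
    | smul c u _ hu => rw [lie_smul]; exact Submodule.smul_mem _ _ hu

end AAlgAux

namespace AAlgAux

variable {F L : Type*} [Field F] [LieRing L] [LieAlgebra F L]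

lemma subalg_bk_le (S : LieSubalgebra F L) :
    bk (S : Submodule F L) (S : Submodule F L) ≤ (S : Submodule F L) :=
  bk_le fun x hx y hy => S.lie_mem hx hy

/-- The ambient derived series of `⊤` agrees with the derived series of `L`. -/
lemma DS_top_eq (i : ℕ) :
    DS (⊤ : Submodule F L) i = (LieAlgebra.derivedSeries F L i).toSubmodule := by
  induction i with
  | zero => simp [LieAlgebra.derivedSeries_def]
  | succ i ih =>
    have hsucc : LieAlgebra.derivedSeries F L (i + 1) =
        ⁅LieAlgebra.derivedSeries F L i, LieAlgebra.derivedSeries F L i⁆ := by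
      rw [LieAlgebra.derivedSeries_def, LieAlgebra.derivedSeriesOfIdeal_succ,
        ← LieAlgebra.derivedSeries_def]
    rw [DS_succ, ih, hsucc, LieSubmodule.lieIdeal_oper_eq_linear_span']
    rfl

end AAlgAux

namespace AAlgAux

variable {F L : Type*} [Field F] [LieRing L] [LieAlgebra F L]

section Fitting

variable {f : Module.End F L} (hder : ∀ a b : L, f ⁅a, b⁆ = ⁅f a, b⁆ + ⁅a, f b⁆)

include hder

/-- Brackets of elements killed by powers of a derivation are killed by the sum power. -/
lemma lie_ker_pow :
    ∀ N j k (a b : L), j + k ≤ N → (f ^ j) a = 0 → (f ^ k) b = 0 →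
      (f ^ (j + k)) ⁅a, b⁆ = 0 := by
  intro N
  induction N with
  | zero =>
    intro j k a b hjk ha hb
    have hj : j = 0 := by omega
    have hk : k = 0 := by omega
    subst hj; subst hk
    simp only [pow_zero, Module.End.one_apply] at ha
    rw [ha, zero_lie, map_zero]
  | succ N ihN =>
    intro j k a b hjk ha hb
    match j, k with
    | 0, k =>
      simp only [pow_zero, Module.End.one_apply] at ha
      rw [ha, zero_lie]
      simp
    | j+1, 0 =>
      simp only [pow_zero, Module.End.one_apply] at hb
      rw [hb, lie_zero]
      simp
    | j+1, k+1 =>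
      have hfa : (f ^ j) (f a) = 0 := by
        rw [← Module.End.mul_apply, ← pow_succ]; exact ha
      have hfb : (f ^ k) (f b) = 0 := by
        rw [← Module.End.mul_apply, ← pow_succ]; exact hb
      have t1 : (f ^ (j + (k + 1))) ⁅f a, b⁆ = 0 := ihN j (k + 1) (f a) b (by omega) hfa hb
      have t2 : (f ^ ((j + 1) + k)) ⁅a, f b⁆ = 0 := ihN (j + 1) k a (f b) (by omega) ha hfb
      have e1 : (j + 1) + (k + 1) = (j + (k + 1)) + 1 := by omega
      rw [e1, pow_succ, Module.End.mul_apply, hder a b, map_add]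
      have e2 : j + (k + 1) = (j + 1) + k := by omega
      rw [t1, e2, t2, add_zero]

/-- Elements in the kernel of a power bracket the stable image into itself. -/
lemma lie_im_pow (S : Submodule F L) (hS : bk S S ≤ S) (hfS : ∀ s ∈ S, f s ∈ S) :
    ∀ k n (a : L), a ∈ S → (f ^ k) a = 0 → ∀ s ∈ S,
      ⁅a, (f ^ (n + k)) s⁆ ∈ Submodule.map (f ^ n : Module.End F L) S := by
  have hpow : ∀ k, ∀ s ∈ S, (f ^ k) s ∈ S := by
    intro k
    induction k with
    | zero => intro s hs; simpa using hs
    | succ k ih =>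
      intro s hs
      rw [pow_succ, Module.End.mul_apply]
      exact ih _ (hfS s hs)
  intro k
  induction k with
  | zero =>
    intro n a _ ha s _
    simp only [pow_zero, Module.End.one_apply] at ha
    rw [ha, zero_lie]
    exact Submodule.zero_mem _
  | succ k ihk =>
    intro n
    induction n with
    | zero =>
      intro a haS _ s hs
      simp only [pow_zero]
      rw [Nat.zero_add]
      refine Submodule.mem_map.mpr ⟨⁅a, (f ^ (k + 1)) s⁆, ?_, by simp⟩
      exact hS (mem_bk haS (hpow (k + 1) s hs))
    | succ n ihn =>
      intro a haS ha s hs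
      have e1 : (n + 1) + (k + 1) = (n + (k + 1)) + 1 := by omega
      have hft : (f ^ ((n + 1) + (k + 1))) s = f ((f ^ (n + (k + 1))) s) := by
        rw [e1, pow_succ', Module.End.mul_apply]
      set t := (f ^ (n + (k + 1))) s with ht
      rw [hft]
      have hbr : ⁅a, f t⁆ = f ⁅a, t⁆ - ⁅f a, t⁆ := by
        rw [hder a t]; abel
      rw [hbr]
      have m1 : f ⁅a, t⁆ ∈ Submodule.map (f ^ (n + 1) : Module.End F L) S := by
        have h1 : ⁅a, t⁆ ∈ Submodule.map (f ^ n : Module.End F L) S := ihn a haS ha s hs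
        obtain ⟨u, hu, hu2⟩ := Submodule.mem_map.mp h1
        refine Submodule.mem_map.mpr ⟨u, hu, ?_⟩
        rw [pow_succ', Module.End.mul_apply, hu2]
      have m2 : ⁅f a, t⁆ ∈ Submodule.map (f ^ (n + 1) : Module.End F L) S := by
        have hfa : (f ^ k) (f a) = 0 := by
          rw [← Module.End.mul_apply, ← pow_succ]; exact ha
        have e2 : n + (k + 1) = (n + 1) + k := by omega
        have := ihk (n + 1) (f a) (hfS a haS) hfa s hs
        rwa [ht, e2]
      exact sub_mem m1 m2

end Fitting

end AAlgAux

namespace AAlgAux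

variable {F L : Type*} [Field F] [LieRing L] [LieAlgebra F L]

section FittingDecomp

variable [FiniteDimensional F L]

lemma rank_nullity_restrict (S : Submodule F L) (g : Module.End F L) :
    finrank F (Submodule.map g S) + finrank F ↥(S ⊓ LinearMap.ker g) = finrank F S := by
  have h := LinearMap.finrank_range_add_finrank_ker (g.domRestrict S)
  rw [LinearMap.range_domRestrict, LinearMap.ker_domRestrict] at h
  have hco : (LinearMap.ker g).comap S.subtype = (S ⊓ LinearMap.ker g).comap S.subtype := by
    ext v
    simp only [Submodule.mem_comap, Submodule.mem_inf]
    exact ⟨fun hv => ⟨v.2, hv⟩, fun hv => hv.2⟩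
  rw [hco] at h
  rwa [(Submodule.comapSubtypeEquivOfLe (inf_le_left :
    S ⊓ LinearMap.ker g ≤ S)).finrank_eq] at h

variable {f : Module.End F L}

lemma pow_mem_of_inv {S : Submodule F L} (hfS : ∀ s ∈ S, f s ∈ S) :
    ∀ k, ∀ s ∈ S, (f ^ k) s ∈ S := by
  intro k
  induction k with
  | zero => intro s hs; simpa using hs
  | succ k ih =>
    intro s hs
    rw [pow_succ, Module.End.mul_apply]
    exact ih _ (hfS s hs)

lemma map_pow_le_of_inv {S : Submodule F L} (hfS : ∀ s ∈ S, f s ∈ S) {j k : ℕ} (h : k ≤ j) :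
    Submodule.map (f ^ j) S ≤ Submodule.map (f ^ k) S := by
  have e : f ^ j = (f ^ k) * (f ^ (j - k)) := by
    rw [← pow_add]; congr 1; omega
  rw [e, Module.End.mul_eq_comp, Submodule.map_comp]
  refine Submodule.map_mono ?_
  intro v hv
  obtain ⟨s, hs, rfl⟩ := Submodule.mem_map.mp hv
  exact pow_mem_of_inv hfS _ s hs

lemma map_pow_stab_of_inv {S : Submodule F L} (hfS : ∀ s ∈ S, f s ∈ S) {j k : ℕ}
    (hk : finrank F L ≤ k) (hjk : k ≤ j) :
    Submodule.map (f ^ j) S = Submodule.map (f ^ k) S := by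
  refine Submodule.eq_of_le_of_finrank_le (map_pow_le_of_inv hfS hjk) ?_
  have h1 := rank_nullity_restrict S (f ^ j)
  have h2 := rank_nullity_restrict S (f ^ k)
  rw [Module.End.ker_pow_eq_ker_pow_finrank_of_le (hk.trans hjk)] at h1
  rw [Module.End.ker_pow_eq_ker_pow_finrank_of_le hk] at h2
  omega

lemma ker_inf_map_pow {S : Submodule F L} (hfS : ∀ s ∈ S, f s ∈ S) {M : ℕ}
    (hM : finrank F L ≤ M) :
    LinearMap.ker (f ^ M) ⊓ Submodule.map (f ^ M) S = ⊥ := by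
  rw [eq_bot_iff]
  rintro v ⟨hv1, hv2⟩
  obtain ⟨s, hs, rfl⟩ := Submodule.mem_map.mp hv2
  have h2M : (f ^ (M + M)) s = 0 := by
    rw [pow_add, Module.End.mul_apply]
    exact hv1
  have hstab : LinearMap.ker (f ^ (M + M)) = LinearMap.ker (f ^ M) := by
    rw [Module.End.ker_pow_eq_ker_pow_finrank_of_le (by omega : finrank F L ≤ M + M),
      Module.End.ker_pow_eq_ker_pow_finrank_of_le hM]
  have : s ∈ LinearMap.ker (f ^ M) := by
    rw [← hstab]; exact h2M
  simpa using this

lemma fitting_sup {S : Submodule F L} (hfS : ∀ s ∈ S, f s ∈ S) {M : ℕ}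
    (hM : finrank F L ≤ M) :
    (S ⊓ LinearMap.ker (f ^ M)) ⊔ Submodule.map (f ^ M) S = S := by
  have hdisj : (S ⊓ LinearMap.ker (f ^ M)) ⊓ Submodule.map (f ^ M) S = ⊥ := by
    rw [eq_bot_iff]
    intro v hv
    have : v ∈ LinearMap.ker (f ^ M) ⊓ Submodule.map (f ^ M) S := ⟨hv.1.2, hv.2⟩
    rwa [ker_inf_map_pow hfS hM] at this
  have hle : (S ⊓ LinearMap.ker (f ^ M)) ⊔ Submodule.map (f ^ M) S ≤ S := by
    refine sup_le inf_le_left ?_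
    intro v hv
    obtain ⟨s, hs, rfl⟩ := Submodule.mem_map.mp hv
    exact pow_mem_of_inv hfS _ s hs
  refine le_antisymm hle ?_
  have hfr := Submodule.finrank_sup_add_finrank_inf_eq
    (S ⊓ LinearMap.ker (f ^ M)) (Submodule.map (f ^ M) S)
  rw [hdisj] at hfr
  have hrn := rank_nullity_restrict S (f ^ M)
  have hb : finrank F (⊥ : Submodule F L) = 0 := finrank_bot F L
  have : finrank F S ≤ finrank F
      ↥((S ⊓ LinearMap.ker (f ^ M)) ⊔ Submodule.map (f ^ M) S) := by omega
  intro v hv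
  have heq := Submodule.eq_of_le_of_finrank_le hle this
  rw [← heq] at hv
  exact hv

end FittingDecomp

end AAlgAux

namespace AAlgAux

variable {F L : Type*} [Field F] [LieRing L] [LieAlgebra F L]

/-- A bracket-closed submodule as a Lie subalgebra. -/
def toSubalg (P : Submodule F L) (h : bk P P ≤ P) : LieSubalgebra F L :=
  { P with lie_mem' := fun hx hy => h (mem_bk hx hy) }

@[simp] lemma toSubalg_toSubmodule (P : Submodule F L) (h : bk P P ≤ P) :
    (toSubalg P h).toSubmodule = P := rfl

@[simp] lemma mem_toSubalg {P : Submodule F L} {h : bk P P ≤ P} {x : L} :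
    x ∈ toSubalg P h ↔ x ∈ P := Iff.rfl

lemma ad_pow_coe {Ks : LieSubalgebra F L} (x : Ks) :
    ∀ (n : ℕ) (y : Ks),
      ((((LieAlgebra.ad F Ks x) ^ n) y : Ks) : L) = ((LieAlgebra.ad F L (x : L)) ^ n) (y : L) := by
  intro n
  induction n with
  | zero => intro y; simp
  | succ n ih =>
    intro y
    rw [pow_succ', pow_succ', Module.End.mul_apply, Module.End.mul_apply]
    rw [LieAlgebra.ad_apply, LieSubalgebra.coe_bracket, ih y, ← LieAlgebra.ad_apply F]

/-- From non-abelianity of a bracket-closed submodule of an A-algebra, produce an element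
whose adjoint action is non-nilpotent, with witnesses inside the submodule. -/
lemma engel_package [FiniteDimensional F L] (hA : IsAAlgebra F L) {K : Submodule F L}
    (hK : bk K K ≤ K) (hne : bk K K ≠ ⊥) :
    ∃ x ∈ K, ∀ m : ℕ, ∃ y ∈ K, ((LieAlgebra.ad F L x) ^ m) y ≠ 0 := by
  by_contra hcon
  push_neg at hcon
  apply hne
  set Ks : LieSubalgebra F L := toSubalg K hK with hKs
  have hnil : ∀ x : Ks, IsNilpotent (LieAlgebra.ad F Ks x) := by
    intro x
    obtain ⟨m, hm⟩ := hcon (x : L) x.2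
    refine ⟨m, ?_⟩
    ext y
    have := ad_pow_coe x m y
    rw [hm (y : L) y.2] at this
    simpa using this
  have hN : LieRing.IsNilpotent Ks := (LieAlgebra.isNilpotent_iff_forall (R := F) (L := Ks)).mpr hnil
  have hab : IsLieAbelian Ks := hA Ks hN
  rw [eq_bot_iff]
  refine bk_le fun a ha b hb => ?_
  have : (⁅(⟨a, ha⟩ : Ks), (⟨b, hb⟩ : Ks)⁆ : Ks) = 0 := trivial_lie_zero _ _ _ _
  have hcoe : ⁅a, b⁆ = ((⁅(⟨a, ha⟩ : Ks), (⟨b, hb⟩ : Ks)⁆ : Ks) : L) := rfl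
  rw [hcoe, this]
  simp

end AAlgAux

namespace AAlgAux

variable {F L : Type*} [Field F] [LieRing L] [LieAlgebra F L]
variable [FiniteDimensional F L]

/-- The conclusion: the `i`-th ambient derived term of `S` is complemented in `S`
by a Lie subalgebra. -/
abbrev Conc (S : LieSubalgebra F L) (i : ℕ) : Prop :=
  ∃ B : LieSubalgebra F L, B.toSubmodule ≤ S.toSubmodule ∧
    DS S.toSubmodule i ⊓ B.toSubmodule = ⊥ ∧
    DS S.toSubmodule i ⊔ B.toSubmodule = S.toSubmodule

/-- Splitting over the last nonzero term of the derived series. -/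
lemma stepA (hA : IsAAlgebra F L) {n : ℕ}
    (IH : ∀ S' : LieSubalgebra F L, finrank F S'.toSubmodule ≤ n → ∀ i, Conc S' i)
    (S : LieSubalgebra F L) (hS : finrank F S.toSubmodule ≤ n + 1)
    (e : ℕ) (hd : DS S.toSubmodule (e + 2) = ⊥) (hne : DS S.toSubmodule (e + 1) ≠ ⊥) :
    Conc S (e + 1) := by
  set Ssub := S.toSubmodule with hSsub
  have hScl : bk Ssub Ssub ≤ Ssub := subalg_bk_le S
  set K := DS Ssub e with hK
  set A := DS Ssub (e + 1) with hA'
  have hKcl : bk K K ≤ K := DS_closed hScl e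
  have hbkK : bk K K = A := rfl
  have hAcl : bk A A ≤ A := DS_closed hScl (e + 1)
  have hAbot : bk A A = ⊥ := hd
  have hKS : K ≤ Ssub := DS_le_self hScl e
  have hAS : A ≤ Ssub := DS_le_self hScl (e + 1)
  -- get an element with non-nilpotent adjoint action
  obtain ⟨x, hxK, hx⟩ := engel_package hA hKcl (by rw [hbkK]; exact hne)
  set f := LieAlgebra.ad F L x with hf
  have hder : ∀ a b : L, f ⁅a, b⁆ = ⁅f a, b⁆ + ⁅a, f b⁆ := by
    intro a b
    simp only [hf, LieAlgebra.ad_apply]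
    rw [leibniz_lie]
  have hxS : x ∈ Ssub := hKS hxK
  have hfS : ∀ s ∈ Ssub, f s ∈ Ssub := by
    intro s hs
    simp only [hf, LieAlgebra.ad_apply]
    exact S.lie_mem hxS hs
  set M := finrank F L + 2 with hM
  have hMfr : finrank F L ≤ M := by omega
  set T := Ssub ⊓ LinearMap.ker (f ^ M) with hT
  set S₁ := Submodule.map (f ^ M) Ssub with hS₁
  have hkerstab : LinearMap.ker (f ^ (M + M)) = LinearMap.ker (f ^ M) := by
    rw [Module.End.ker_pow_eq_ker_pow_finrank_of_le (by omega : finrank F L ≤ M + M),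
      Module.End.ker_pow_eq_ker_pow_finrank_of_le hMfr]
  have hTcl : bk T T ≤ T := by
    refine bk_le fun a ha b hb => ?_
    refine ⟨S.lie_mem ha.1 hb.1, ?_⟩
    have h0 := lie_ker_pow hder (M + M) M M a b le_rfl ha.2 hb.2
    have : ⁅a, b⁆ ∈ LinearMap.ker (f ^ (M + M)) := h0
    rwa [hkerstab] at this
  have hTS : T ≤ Ssub := inf_le_left
  -- S₁ is contained in A
  have hS₁A : S₁ ≤ A := by
    have h2 : S₁ ≤ Submodule.map (f ^ 2) Ssub := map_pow_le_of_inv hfS (by omega)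
    refine h2.trans ?_
    intro v hv
    obtain ⟨s, hs, rfl⟩ := Submodule.mem_map.mp hv
    have hxs : ⁅x, s⁆ ∈ K := by
      have h1 : ⁅s, x⁆ ∈ K := bk_DS_le hScl e (mem_bk hs hxK)
      have h2 : ⁅x, s⁆ = -⁅s, x⁆ := by rw [← lie_skew]
      rw [h2]
      exact neg_mem h1
    have he2 : (f ^ 2) s = ⁅x, ⁅x, s⁆⁆ := by
      rw [pow_two, Module.End.mul_apply, hf]
      simp [LieAlgebra.ad_apply]
    rw [he2, ← hbkK]
    exact mem_bk hxK hxs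
  -- Fitting decomposition
  have hdisj : T ⊓ S₁ = ⊥ := by
    rw [eq_bot_iff]
    intro v hv
    have : v ∈ LinearMap.ker (f ^ M) ⊓ S₁ := ⟨hv.1.2, hv.2⟩
    rw [hS₁, ker_inf_map_pow hfS hMfr] at this
    exact this
  have hsup : T ⊔ S₁ = Ssub := fitting_sup hfS hMfr
  have hS₁ne : S₁ ≠ ⊥ := by
    obtain ⟨y, hyK, hy⟩ := hx M
    intro h0
    apply hy
    have hmem : (f ^ M) y ∈ S₁ := Submodule.mem_map_of_mem (hKS hyK)
    rw [h0] at hmem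
    simpa using hmem
  -- [T, S₁] ⊆ S₁
  have hTS₁ : bk T S₁ ≤ S₁ := by
    refine bk_le fun a ha b hb => ?_
    have hstab : Submodule.map (f ^ (M + M)) Ssub = S₁ :=
      map_pow_stab_of_inv hfS hMfr (by omega)
    have hb' : b ∈ Submodule.map (f ^ (M + M)) Ssub := by rw [hstab]; exact hb
    obtain ⟨s, hs, rfl⟩ := Submodule.mem_map.mp hb'
    have := lie_im_pow hder Ssub hScl hfS M M a ha.1 ha.2 s hs
    exact this
  -- key comparison of derived series
  have hkey : ∀ j, DS Ssub j ≤ DS T j ⊔ S₁ := by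
    intro j
    induction j with
    | zero => exact le_of_eq hsup.symm
    | succ j ih =>
      refine le_trans (bk_mono ih ih) ?_
      refine le_trans (bk_sup_sup _ _) ?_
      refine sup_le (sup_le ?_ ?_) (sup_le ?_ ?_)
      · exact le_sup_left
      · exact le_sup_of_le_right ((bk_mono (DS_le_self hTcl j) le_rfl).trans hTS₁)
      · rw [bk_comm]
        exact le_sup_of_le_right ((bk_mono (DS_le_self hTcl j) le_rfl).trans hTS₁)
      · have : bk S₁ S₁ ≤ bk A A := bk_mono hS₁A hS₁A
        rw [hAbot] at this
        exact this.trans bot_le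
  have hinter : ∀ j, DS Ssub j ⊓ T = DS T j := by
    intro j
    refine le_antisymm ?_ (le_inf (DS_mono_left hTS j) (DS_le_self hTcl j))
    refine le_trans (inf_le_inf_right T (hkey j)) ?_
    rw [sup_inf_assoc_of_le _ (DS_le_self hTcl j)]
    have : S₁ ⊓ T = ⊥ := by rw [inf_comm]; exact hdisj
    rw [this, sup_bot_eq]
  -- final case split
  by_cases hAT : A ⊓ T = ⊥
  · refine ⟨toSubalg T hTcl, hTS, ?_, ?_⟩
    · show A ⊓ T = ⊥
      exact hAT
    · show A ⊔ T = Ssub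
      refine le_antisymm (sup_le hAS hTS) ?_
      rw [← hsup]
      exact sup_le le_sup_right (hS₁A.trans le_sup_left)
  · -- recurse into T
    have hS₁S : S₁ ≤ Ssub := by
      intro v hv
      obtain ⟨s, hs, rfl⟩ := Submodule.mem_map.mp hv
      exact pow_mem_of_inv hfS M s hs
    have hTlt : T < Ssub := by
      refine lt_of_le_of_ne hTS ?_
      intro h
      apply hS₁ne
      have h1 : S₁ ≤ T ⊓ S₁ := le_inf (by rw [h]; exact hS₁S) le_rfl
      rw [hdisj] at h1
      exact le_bot_iff.mp h1
    have hTrank : finrank F T ≤ n := by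
      have := Submodule.finrank_lt_finrank_of_lt hTlt
      omega
    obtain ⟨B, hBle, hB1, hB2⟩ := IH (toSubalg T hTcl) hTrank (e + 1)
    rw [toSubalg_toSubmodule] at hBle hB1 hB2
    have hDT : DS T (e + 1) = A ⊓ T := (hinter (e + 1)).symm
    refine ⟨B, hBle.trans hTS, ?_, ?_⟩
    · show A ⊓ B.toSubmodule = ⊥
      have h1 : A ⊓ B.toSubmodule = (A ⊓ T) ⊓ B.toSubmodule := by
        rw [inf_assoc, inf_eq_right.mpr hBle]
      rw [h1, ← hDT]
      exact hB1
    · show A ⊔ B.toSubmodule = Ssub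
      have h1 : A ⊔ B.toSubmodule = A ⊔ T := by
        refine le_antisymm (sup_le le_sup_left (hBle.trans le_sup_right)) ?_
        refine sup_le le_sup_left ?_
        conv_lhs => rw [← hB2, hDT]
        exact sup_le (inf_le_left.trans le_sup_left) le_sup_right
      rw [h1]
      refine le_antisymm (sup_le hAS hTS) ?_
      rw [← hsup]
      exact sup_le le_sup_right (hS₁A.trans le_sup_left)

end AAlgAux

namespace AAlgAux

variable {F L : Type*} [Field F] [LieRing L] [LieAlgebra F L]
variable [FiniteDimensional F L] [LieAlgebra.IsSolvable L]

theorem main_aux (hA : IsAAlgebra F L) :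
    ∀ (n : ℕ) (S : LieSubalgebra F L), finrank F S.toSubmodule ≤ n → ∀ i, Conc S i := by
  intro n
  induction n with
  | zero =>
    intro S hS i
    have h0 : finrank F S.toSubmodule = 0 := Nat.le_zero.mp hS
    have hbot : S.toSubmodule = ⊥ := Submodule.finrank_eq_zero.mp h0
    have hDS : DS S.toSubmodule i = ⊥ :=
      le_bot_iff.mp (by rw [← hbot]; exact DS_le_self (subalg_bk_le S) i)
    exact ⟨S, le_rfl, by rw [hDS, bot_inf_eq], by rw [hDS, bot_sup_eq]⟩
  | succ n IH =>
    intro S hS i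
    by_cases hbot : DS S.toSubmodule i = ⊥
    · exact ⟨S, le_rfl, by rw [hbot, bot_inf_eq], by rw [hbot, bot_sup_eq]⟩
    rcases Nat.eq_zero_or_pos i with hi0 | hi1
    · subst hi0
      refine ⟨⊥, bot_le, ?_, ?_⟩
      · rw [LieSubalgebra.bot_toSubmodule, inf_bot_eq]
      · rw [LieSubalgebra.bot_toSubmodule, sup_bot_eq]
        rfl
    have hsolv : ∃ k, DS S.toSubmodule k = ⊥ := by
      obtain ⟨k, hk⟩ := LieAlgebra.IsSolvable.solvable (R := F) (L := L)
      refine ⟨k, le_bot_iff.mp ?_⟩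
      have h1 : DS S.toSubmodule k ≤ DS (⊤ : Submodule F L) k := DS_mono_left le_top k
      rw [DS_top_eq, hk] at h1
      simpa using h1
    classical
    have hdbot : DS S.toSubmodule (Nat.find hsolv) = ⊥ := Nat.find_spec hsolv
    set d := Nat.find hsolv with hd
    have hid : i < d := by
      rcases Nat.lt_or_ge i d with h | h
      · exact h
      · exact absurd (le_bot_iff.mp ((DS_antitone (subalg_bk_le S) h).trans hdbot.le)) hbot
    have hd2 : 2 ≤ d := by omega
    obtain ⟨e, he⟩ : ∃ e, d = e + 2 := ⟨d - 2, by omega⟩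
    have hdse : DS S.toSubmodule (e + 2) = ⊥ := by rw [← he]; exact hdbot
    have hnelast : DS S.toSubmodule (e + 1) ≠ ⊥ := by
      rw [hd] at he
      exact Nat.find_min hsolv (show e + 1 < Nat.find hsolv by omega)
    have hstep : Conc S (e + 1) := stepA hA IH S hS e hdse hnelast
    by_cases hie : i = e + 1
    · rw [hie]; exact hstep
    have hile : i ≤ e := by omega
    obtain ⟨Bs, hBsle, hBs1, hBs2⟩ := hstep
    set A := DS S.toSubmodule (e + 1) with hA'
    set Bm := Bs.toSubmodule with hBm
    have hBmcl : bk Bm Bm ≤ Bm := subalg_bk_le Bs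
    have hScl : bk S.toSubmodule S.toSubmodule ≤ S.toSubmodule := subalg_bk_le S
    have hAideal : bk S.toSubmodule A ≤ A := bk_DS_le hScl (e + 1)
    have hAS : A ≤ S.toSubmodule := DS_le_self hScl (e + 1)
    have hdec : ∀ j, DS S.toSubmodule j ≤ A ⊔ DS Bm j := by
      intro j
      induction j with
      | zero => exact le_of_eq hBs2.symm
      | succ j ih =>
        refine le_trans (bk_mono ih ih) ?_
        refine le_trans (bk_sup_sup _ _) ?_
        have hDjS : DS Bm j ≤ S.toSubmodule := (DS_le_self hBmcl j).trans hBsle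
        refine sup_le (sup_le ?_ ?_) (sup_le ?_ ?_)
        · exact le_sup_of_le_left ((bk_mono hAS le_rfl).trans hAideal)
        · rw [bk_comm]
          exact le_sup_of_le_left ((bk_mono hDjS le_rfl).trans hAideal)
        · exact le_sup_of_le_left ((bk_mono hDjS le_rfl).trans hAideal)
        · exact le_sup_of_le_right le_rfl
    have hdeceq : DS S.toSubmodule i = A ⊔ DS Bm i := by
      refine le_antisymm (hdec i) (sup_le ?_ (DS_mono_left hBsle i))
      exact DS_antitone hScl (by omega : i ≤ e + 1)
    have hAne : A ≠ ⊥ := hnelast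
    have hBlt : Bm < S.toSubmodule := by
      refine lt_of_le_of_ne hBsle ?_
      intro h
      apply hAne
      have h1 : A ≤ A ⊓ Bm := le_inf le_rfl (by rw [h]; exact hAS)
      rw [hBs1] at h1
      exact le_bot_iff.mp h1
    have hBrank : finrank F Bm ≤ n := by
      have := Submodule.finrank_lt_finrank_of_lt hBlt
      omega
    obtain ⟨C, hCle, hC1, hC2⟩ := IH Bs hBrank i
    have hsub : DS S.toSubmodule i ⊓ Bm = DS Bm i := by
      rw [hdeceq, sup_comm, sup_inf_assoc_of_le _ (DS_le_self hBmcl i)]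
      rw [hBs1, sup_bot_eq]
    refine ⟨C, hCle.trans hBsle, ?_, ?_⟩
    · calc DS S.toSubmodule i ⊓ C.toSubmodule
          = DS S.toSubmodule i ⊓ (Bm ⊓ C.toSubmodule) := by rw [inf_eq_right.mpr hCle]
        _ = (DS S.toSubmodule i ⊓ Bm) ⊓ C.toSubmodule := by rw [inf_assoc]
        _ = DS Bm i ⊓ C.toSubmodule := by rw [hsub]
        _ = ⊥ := hC1
    · rw [hdeceq, sup_assoc, hC2]
      exact hBs2

end AAlgAux


theorem splits_over_derived_series (F L : Type*) [Field F] [LieRing L] [LieAlgebra F L]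
    [FiniteDimensional F L] [LieAlgebra.IsSolvable L] (hA : IsAAlgebra F L) (i : ℕ) :
    ∃ B : LieSubalgebra F L,
      (LieAlgebra.derivedSeries F L i).toSubmodule ⊓ B.toSubmodule = ⊥ ∧
      (LieAlgebra.derivedSeries F L i).toSubmodule ⊔ B.toSubmodule = ⊤ := by
  classical
  obtain ⟨B, _, h1, h2⟩ :=
    AAlgAux.main_aux hA (finrank F (⊤ : LieSubalgebra F L).toSubmodule) ⊤ le_rfl i
  have htop : (⊤ : LieSubalgebra F L).toSubmodule = (⊤ : Submodule F L) := by
    ext v; simp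
  rw [htop] at h1 h2
  rw [AAlgAux.DS_top_eq] at h1 h2
  exact ⟨B, h1, h2⟩
end

section
/- Let L be a finite-dimensional solvable Lie A-algebra over a field F, let A be a minimal ideal of L, and suppose A ⊆ L^(i) but A ⊄ L^(i+1). Then [L^(i), A] = 0, i.e., A is contained in the centre of the subalgebra L^(i). -/
theorem minimal_ideal_central_in_derived (F L : Type*) [Field F] [LieRing L] [LieAlgebra F L]
    [FiniteDimensional F L] [LieAlgebra.IsSolvable L] (hA : IsAAlgebra F L)
    (A : LieIdeal F L) (hAne : A ≠ ⊥)
    (hAmin : ∀ I : LieIdeal F L, I ≤ A → I = ⊥ ∨ I = A)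
    (i : ℕ) (hle : A ≤ LieAlgebra.derivedSeries F L i)
    (hnle : ¬ A ≤ LieAlgebra.derivedSeries F L (i + 1)) :
    ⁅LieAlgebra.derivedSeries F L i, A⁆ = (⊥ : LieIdeal F L) := by
  have h1 : ⁅LieAlgebra.derivedSeries F L i, A⁆ ≤ A := LieSubmodule.lie_le_right A _
  have h2 : ⁅LieAlgebra.derivedSeries F L i, A⁆ ≤ LieAlgebra.derivedSeries F L (i + 1) := by
    simp only [LieAlgebra.derivedSeries_def] at hle ⊢
    rw [LieAlgebra.derivedSeriesOfIdeal_succ]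
    exact LieSubmodule.mono_lie le_rfl hle
  rcases hAmin _ h1 with h | h
  · exact h
  · exact absurd (h ▸ h2) hnle
end

section
/- Let L be a finite-dimensional Lie A-algebra over a field F and let B, D be ideals of L. Then [B, D] = 0 if and only if [B ∩ D, B] = 0 and [B ∩ D, D] = 0 (that is, B centralizes D if and only if B ∩ D ⊆ Z(B) ∩ Z(D)). -/
lemma key_lemma {F L : Type*} [Field F] [LieRing L] [LieAlgebra F L]
    (hA : IsAAlgebra F L) {b d : L} (hb : ⁅b, ⁅b, d⁆⁆ = 0) (hd : ⁅d, ⁅b, d⁆⁆ = 0) :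
    ⁅b, d⁆ = 0 := by
  set x := ⁅b, d⁆ with hxdef
  set V : Submodule F L := Submodule.span F ({b, d, x} : Set L) with hV
  set M : Submodule F L := Submodule.span F ({x} : Set L) with hM
  have hMV : M ≤ V := Submodule.span_mono (by intro y hy; simp only [Set.mem_singleton_iff] at hy; simp [hy])
  -- everything in V commutes with x
  have h1 : ∀ w ∈ V, ⁅w, x⁆ = 0 := by
    intro w hw
    induction hw using Submodule.span_induction with
    | mem g hg =>
      rcases hg with rfl | rfl | rfl
      · exact hb
      · exact hd
      · exact lie_self x
    | zero => simp
    | add y z _ _ hy hz => rw [add_lie, hy, hz, add_zero]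
    | smul c y _ hy => rw [smul_lie, hy, smul_zero]
  -- brackets of elements of V land in M
  have h2a : ∀ z ∈ V, ⁅b, z⁆ ∈ M := by
    intro z hz
    induction hz using Submodule.span_induction with
    | mem g hg =>
      rcases hg with rfl | rfl | rfl
      · simp
      · exact Submodule.mem_span_singleton_self x
      · rw [hb]; simp
    | zero => simp
    | add y z _ _ hy hz => rw [lie_add]; exact add_mem hy hz
    | smul c y _ hy => rw [lie_smul]; exact Submodule.smul_mem _ _ hy
  have h2b : ∀ z ∈ V, ⁅d, z⁆ ∈ M := by
    intro z hz
    induction hz using Submodule.span_induction with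
    | mem g hg =>
      rcases hg with rfl | rfl | rfl
      · rw [← lie_skew]; exact neg_mem (Submodule.mem_span_singleton_self x)
      · simp
      · rw [hd]; simp
    | zero => simp
    | add y z _ _ hy hz => rw [lie_add]; exact add_mem hy hz
    | smul c y _ hy => rw [lie_smul]; exact Submodule.smul_mem _ _ hy
  have h2c : ∀ z ∈ V, ⁅x, z⁆ ∈ M := by
    intro z hz
    rw [← lie_skew, h1 z hz, neg_zero]
    simp
  have h2 : ∀ y ∈ V, ∀ z ∈ V, ⁅y, z⁆ ∈ M := by
    intro y hy z hz
    induction hy using Submodule.span_induction with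
    | mem g hg =>
      rcases hg with rfl | rfl | rfl
      · exact h2a z hz
      · exact h2b z hz
      · exact h2c z hz
    | zero => simp
    | add y y' _ _ hy hy' => rw [add_lie]; exact add_mem hy hy'
    | smul c y _ hy => rw [smul_lie]; exact Submodule.smul_mem _ _ hy
  -- the subalgebra
  set S : LieSubalgebra F L :=
    { toSubmodule := V
      lie_mem' := fun {y z} hy hz => hMV (h2 y hy z hz) } with hS
  have hbS : b ∈ S := Submodule.subset_span (by simp)
  have hdS : d ∈ S := Submodule.subset_span (by simp)
  -- commutators are central in S
  have hcent : ∀ m : S, (m : L) ∈ M → m ∈ LieModule.maxTrivSubmodule F S S := by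
    intro m hm
    rw [LieModule.mem_maxTrivSubmodule]
    intro w
    obtain ⟨c, hc⟩ := Submodule.mem_span_singleton.mp hm
    apply Subtype.ext
    show ⁅(w : L), (m : L)⁆ = 0
    rw [← hc, lie_smul, h1 w w.2, smul_zero]
  have h3 : ⁅(⊤ : LieIdeal F S), (⊤ : LieIdeal F S)⁆ ≤ LieModule.maxTrivSubmodule F S S := by
    rw [LieSubmodule.lie_le_iff]
    intro y _ z _
    exact hcent ⁅y, z⁆ (h2 y y.2 z z.2)
  have h4 : LieModule.lowerCentralSeries F (↥S) (↥S) 2 = ⊥ := by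
    rw [eq_bot_iff]
    refine le_trans ?_ (LieModule.ideal_oper_maxTrivSubmodule_eq_bot F S S ⊤).le
    show LieModule.lowerCentralSeries F (↥S) (↥S) (1 + 1) ≤ _
    rw [LieModule.lowerCentralSeries_succ]
    refine LieSubmodule.mono_lie_right _ ?_
    rw [LieModule.lowerCentralSeries_succ, LieModule.lowerCentralSeries_zero]
    exact h3
  have hnil : LieRing.IsNilpotent S := LieModule.IsNilpotent.mk (R := F) (h := h4)
  have hab : IsLieAbelian S := hA S hnil
  exact Subtype.ext_iff.mp (hab.trivial ⟨b, hbS⟩ ⟨d, hdS⟩)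

theorem centralize_iff_inf_central (F L : Type*) [Field F] [LieRing L] [LieAlgebra F L]
    [FiniteDimensional F L] (hA : IsAAlgebra F L) (B D : LieIdeal F L) :
    ⁅B, D⁆ = (⊥ : LieIdeal F L) ↔
      (⁅B ⊓ D, B⁆ = (⊥ : LieIdeal F L) ∧ ⁅B ⊓ D, D⁆ = (⊥ : LieIdeal F L)) := by
  constructor
  · intro h
    refine ⟨le_bot_iff.mp ?_, le_bot_iff.mp ?_⟩
    · refine le_trans (LieSubmodule.mono_lie inf_le_right le_rfl) ?_
      rw [LieSubmodule.lie_comm, h]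
    · exact le_trans (LieSubmodule.mono_lie inf_le_left le_rfl) h.le
  · rintro ⟨h1, h2⟩
    rw [LieSubmodule.lie_eq_bot_iff] at h1 h2 ⊢
    intro b hb d hd
    have hxB : ⁅b, d⁆ ∈ B := by
      rw [← lie_skew]
      exact neg_mem (B.lie_mem hb)
    have hxD : ⁅b, d⁆ ∈ D := D.lie_mem hd
    have hxBD : ⁅b, d⁆ ∈ B ⊓ D := by
      rw [LieSubmodule.mem_inf]; exact ⟨hxB, hxD⟩
    have hbx : ⁅b, ⁅b, d⁆⁆ = 0 := by
      rw [← lie_skew, h1 ⁅b, d⁆ hxBD b hb, neg_zero]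
    have hdx : ⁅d, ⁅b, d⁆⁆ = 0 := by
      rw [← lie_skew, h2 ⁅b, d⁆ hxBD d hd, neg_zero]
    exact key_lemma hA hbx hdx
end

section
/- Let L be a finite-dimensional strongly solvable Lie A-algebra over a field F and let A be a minimal ideal of L. Then either A ⊆ [L, L] or A ⊆ Z(L); moreover, A ⊆ [L, L] if and only if [L, A] = A. -/
section Aux

open LieAlgebra LieModule

attribute [local instance 100] LieRing.ofAssociativeRing

variable {F L : Type*} [Field F] [LieRing L] [LieAlgebra F L] [FiniteDimensional F L]

set_option maxHeartbeats 1000000 in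
private lemma crux_aux (hA : ∀ U : LieSubalgebra F L, LieRing.IsNilpotent U → IsLieAbelian U)
    (hss : LieRing.IsNilpotent (LieAlgebra.derivedSeries F L 1))
    (A : LieIdeal F L) (hAne : A ≠ ⊥) (hAle : A ≤ LieAlgebra.derivedSeries F L 1)
    (hcent : ⁅(⊤ : LieIdeal F L), A⁆ = ⊥) : False := by
  set V : LieIdeal F L := LieAlgebra.derivedSeries F L 1 with hV
  have hab : IsLieAbelian V := hA (LieIdeal.toLieSubalgebra F L V) hss
  have habL : ∀ z w : L, z ∈ V → w ∈ V → ⁅z, w⁆ = 0 := fun z w hz hw =>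
    congrArg Subtype.val (hab.trivial ⟨z, hz⟩ ⟨w, hw⟩)
  have hmemV : ∀ x y : L, ⁅x, y⁆ ∈ V := by
    intro x y
    rw [hV, LieAlgebra.derivedSeries_def, LieAlgebra.derivedSeriesOfIdeal_succ,
      LieAlgebra.derivedSeriesOfIdeal_zero]
    exact LieSubmodule.lie_mem_lie (LieSubmodule.mem_top x) (LieSubmodule.mem_top y)
  let φ := LieModule.toEnd F L V
  have hφ0 : ∀ z : L, z ∈ V → φ z = 0 := by
    intro z hz; ext v
    exact congrArg Subtype.val (hab.trivial ⟨z, hz⟩ v)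
  let E : LieSubalgebra F (Module.End F V) := φ.range
  have hEab : IsLieAbelian E := by
    constructor
    rintro ⟨f, x, rfl⟩ ⟨g, y, rfl⟩
    apply Subtype.ext
    show ⁅φ x, φ y⁆ = 0
    rw [← LieHom.map_lie]
    exact hφ0 _ (hmemV x y)
  -- the element a
  obtain ⟨a, haA, ha0⟩ : ∃ a : L, a ∈ A ∧ a ≠ 0 := by
    by_contra hc
    push_neg at hc
    exact hAne (LieSubmodule.eq_bot_iff A |>.mpr hc)
  have haV : a ∈ V := hAle haA
  have hacent : ∀ x : L, ⁅x, a⁆ = 0 := by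
    intro x
    have h : ⁅x, a⁆ ∈ (⁅(⊤ : LieIdeal F L), A⁆ : LieIdeal F L) :=
      LieSubmodule.lie_mem_lie (LieSubmodule.mem_top x) haA
    rw [hcent] at h
    exact h
  set av : V := (⟨a, haV⟩ : V) with hav
  have hav0 : av ∈ genWeightSpace V (0 : E → F) := by
    rw [mem_genWeightSpace]
    rintro ⟨f, x, rfl⟩
    refine ⟨1, ?_⟩
    simp only [Pi.zero_apply, zero_smul, sub_zero, pow_one]
    apply Subtype.ext
    show ((φ x) av : L) = 0
    exact hacent x
  have hcompl := LieModule.isCompl_genWeightSpace_zero_posFittingComp F E V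
  have hanot : av ∉ posFittingComp F E V := by
    intro hmem
    have h : av ∈ (genWeightSpace V (0 : E → F)) ⊓ (posFittingComp F E V) :=
      LieSubmodule.mem_inf _ _ _ |>.mpr ⟨hav0, hmem⟩
    rw [hcompl.inf_eq_bot, LieSubmodule.mem_bot] at h
    exact ha0 (congrArg Subtype.val h)
  -- a bracket outside the positive Fitting component
  have hVeq : V = ⁅(⊤ : LieIdeal F L), ⊤⁆ := by
    rw [hV, LieAlgebra.derivedSeries_def, LieAlgebra.derivedSeriesOfIdeal_succ,
      LieAlgebra.derivedSeriesOfIdeal_zero]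
  obtain ⟨x, y, hxy⟩ : ∃ x y : L, (⟨⁅x, y⁆, hmemV x y⟩ : V) ∉ posFittingComp F E V := by
    by_contra hcon
    push_neg at hcon
    apply hanot
    have hsp : ∀ m : L, m ∈ Submodule.span F {m : L | ∃ x ∈ (⊤ : LieIdeal F L),
        ∃ n ∈ (⊤ : LieIdeal F L), ⁅x, n⁆ = m} →
        ∃ h : m ∈ V, (⟨m, h⟩ : V) ∈ posFittingComp F E V := by
      intro m hm
      refine Submodule.span_induction ?_ ?_ ?_ ?_ hm
      · rintro m ⟨z, -, w, -, rfl⟩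
        exact ⟨hmemV z w, hcon z w⟩
      · exact ⟨V.zero_mem, (posFittingComp F E V).zero_mem⟩
      · rintro m n - - ⟨hm, hmp⟩ ⟨hn, hnp⟩
        refine ⟨V.add_mem hm hn, ?_⟩
        have : (⟨m + n, V.add_mem hm hn⟩ : V) = ⟨m, hm⟩ + ⟨n, hn⟩ := rfl
        rw [this]
        exact (posFittingComp F E V).add_mem hmp hnp
      · rintro t m - ⟨hm, hmp⟩
        refine ⟨V.smul_mem t hm, ?_⟩
        have : (⟨t • m, V.smul_mem t hm⟩ : V) = t • (⟨m, hm⟩ : V) := rfl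
        rw [this]
        exact (posFittingComp F E V).smul_mem t hmp
    have haV' : a ∈ Submodule.span F {m : L | ∃ x ∈ (⊤ : LieIdeal F L),
        ∃ n ∈ (⊤ : LieIdeal F L), ⁅x, n⁆ = m} := by
      have h1 : a ∈ (⁅(⊤ : LieIdeal F L), (⊤ : LieIdeal F L)⁆ : LieIdeal F L) := by
        rw [← hVeq]; exact haV
      rw [← LieSubmodule.mem_toSubmodule, LieSubmodule.lieIdeal_oper_eq_linear_span'] at h1
      exact h1
    obtain ⟨h, hp⟩ := hsp a haV'
    have : (⟨a, h⟩ : V) = av := Subtype.ext rfl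
    rwa [this] at hp
  set c : V := (⟨⁅x, y⁆, hmemV x y⟩ : V) with hc
  set X : Module.End F V := φ x with hX
  set Y : Module.End F V := φ y with hY
  have hXE : X ∈ E := ⟨x, rfl⟩
  have hYE : Y ∈ E := ⟨y, rfl⟩
  have hXYcomm : ∀ f g : Module.End F V, f ∈ Submodule.span F {X, Y} →
      g ∈ Submodule.span F {X, Y} → ⁅f, g⁆ = 0 := by
    have hXY : ⁅X, Y⁆ = 0 := by
      rw [hX, hY, ← LieHom.map_lie]; exact hφ0 _ (hmemV x y)
    intro f g hf hg
    obtain ⟨α, β, rfl⟩ := Submodule.mem_span_pair.mp hf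
    obtain ⟨γ, δ, rfl⟩ := Submodule.mem_span_pair.mp hg
    have hYX : ⁅Y, X⁆ = 0 := by rw [← lie_skew, hXY, neg_zero]
    simp only [add_lie, lie_add, smul_lie, lie_smul, lie_self, hXY, hYX, smul_zero, add_zero,
      zero_add]
  let E' : LieSubalgebra F (Module.End F V) :=
    { toSubmodule := Submodule.span F {X, Y}
      lie_mem' := fun hf hg => by
        rw [hXYcomm _ _ hf hg]; exact Submodule.zero_mem _ }
  have hE'ab : IsLieAbelian E' := by
    constructor
    rintro ⟨f, hf⟩ ⟨g, hg⟩
    exact Subtype.ext (hXYcomm f g hf hg)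
  have hE'E : ∀ f : Module.End F V, f ∈ E' → f ∈ E := by
    intro f hf
    have : Submodule.span F {X, Y} ≤ E.toSubmodule := by
      rw [Submodule.span_le]
      rintro g hg
      rcases hg with h | h
      · rw [h]; exact hXE
      · rw [Set.mem_singleton_iff.mp h]; exact hYE
    exact this hf
  have hXE' : X ∈ E' := Submodule.subset_span (Set.mem_insert _ _)
  have hYE' : Y ∈ E' := Submodule.subset_span (Set.mem_insert_of_mem _ rfl)
  -- the action of E' elements
  have hE'act : ∀ (e : E') (v : V), ⁅e, v⁆ = (e : Module.End F V) v := fun e v => rfl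
  -- Fitting decomposition over E'
  have hcompl' := LieModule.isCompl_genWeightSpace_zero_posFittingComp F E' V
  -- stability of the positive Fitting component
  have hstab : posFittingComp F E' V = ⁅(⊤ : LieIdeal F E'), posFittingComp F E' V⁆ := by
    obtain ⟨n, hn⟩ :=
      Filter.eventually_atTop.mp (LieModule.eventually_iInf_lowerCentralSeries_eq F E' V)
    have h0 : ⨅ k, lowerCentralSeries F E' V k = posFittingComp F E' V :=
      LieModule.iInf_lowerCentralSeries_eq_posFittingComp F E' V
    have e1 : posFittingComp F E' V = lowerCentralSeries F E' V n := by
      rw [← h0]; exact hn n le_rfl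
    have e2 : posFittingComp F E' V = lowerCentralSeries F E' V (n + 1) := by
      rw [← h0]; exact hn (n + 1) (Nat.le_succ n)
    calc posFittingComp F E' V = lowerCentralSeries F E' V (n + 1) := e2
      _ = ⁅(⊤ : LieIdeal F E'), lowerCentralSeries F E' V n⁆ :=
        LieModule.lowerCentralSeries_succ F E' V n
      _ = ⁅(⊤ : LieIdeal F E'), posFittingComp F E' V⁆ := by rw [← e1]
  -- comparison of the two positive Fitting components
  have h1'le1 : ∀ v : V, v ∈ posFittingComp F E' V → v ∈ posFittingComp F E V := by
    intro v hv
    rw [LieModule.posFittingComp, ← LieSubmodule.mem_toSubmodule,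
      LieSubmodule.iSup_toSubmodule] at hv
    have hle : (⨆ e : E', ((posFittingCompOf F V e : LieSubmodule F E' V) : Submodule F V)) ≤
        ((posFittingComp F E V : LieSubmodule F E V) : Submodule F V) := by
      refine iSup_le fun e => ?_
      intro m hm
      rw [LieSubmodule.mem_toSubmodule, LieModule.mem_posFittingCompOf] at hm
      rw [LieSubmodule.mem_toSubmodule]
      have : m ∈ posFittingCompOf F V (⟨(e : Module.End F V), hE'E _ e.2⟩ : E) := by
        rw [LieModule.mem_posFittingCompOf]
        exact hm
      exact LieModule.posFittingCompOf_le_posFittingComp F E V _ this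
    exact hle hv
  -- elements of the positive Fitting component over E' are of the form X p + Y q
  have himg : ∀ v : V, v ∈ posFittingComp F E' V →
      ∃ p q : V, p ∈ posFittingComp F E' V ∧ q ∈ posFittingComp F E' V ∧ v = X p + Y q := by
    intro v hv
    rw [hstab, ← LieSubmodule.mem_toSubmodule,
      LieSubmodule.lieIdeal_oper_eq_linear_span'] at hv
    refine Submodule.span_induction ?_ ?_ ?_ ?_ hv
    · rintro m ⟨e, -, w, hw, rfl⟩
      obtain ⟨α, β, he⟩ := Submodule.mem_span_pair.mp e.2
      refine ⟨α • w, β • w, (posFittingComp F E' V).smul_mem _ hw,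
        (posFittingComp F E' V).smul_mem _ hw, ?_⟩
      rw [hE'act, ← he]
      simp [add_smul, smul_smul, mul_comm]
    · exact ⟨0, 0, (posFittingComp F E' V).zero_mem, (posFittingComp F E' V).zero_mem, by simp⟩
    · rintro m n - - ⟨p, q, hp, hq, rfl⟩ ⟨p', q', hp', hq', rfl⟩
      exact ⟨p + p', q + q', (posFittingComp F E' V).add_mem hp hp',
        (posFittingComp F E' V).add_mem hq hq', by simp; abel⟩
    · rintro t m - ⟨p, q, hp, hq, rfl⟩
      exact ⟨t • p, t • q, (posFittingComp F E' V).smul_mem _ hp,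
        (posFittingComp F E' V).smul_mem _ hq, by simp⟩
  -- decompose c
  have hcsup : c ∈ genWeightSpace V (0 : E' → F) ⊔ posFittingComp F E' V := by
    rw [hcompl'.sup_eq_top]; trivial
  rw [← LieSubmodule.mem_toSubmodule, LieSubmodule.sup_toSubmodule] at hcsup
  obtain ⟨c₀, hc₀, c₁, hc₁, hcdec⟩ := Submodule.mem_sup.mp hcsup
  rw [LieSubmodule.mem_toSubmodule] at hc₀ hc₁
  obtain ⟨p, q, hp1, hq1, hc₁eq⟩ := himg c₁ hc₁
  -- the corrected elements
  set xt : L := x + (q : L) with hxt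
  set yt : L := y - (p : L) with hyt
  have hXact : ∀ v : V, ((X v : V) : L) = ⁅x, (v : L)⁆ := fun v => rfl
  have hYact : ∀ v : V, ((Y v : V) : L) = ⁅y, (v : L)⁆ := fun v => rfl
  have hB1 : ⁅xt, yt⁆ = (c₀ : L) := by
    have h1 : ⁅xt, yt⁆ = ⁅x, y⁆ - ⁅x, (p : L)⁆ + (⁅(q : L), y⁆ - ⁅(q : L), (p : L)⁆) := by
      rw [hxt, hyt]; simp only [lie_sub, add_lie]; abel
    have h2 : ⁅(q : L), (p : L)⁆ = 0 := habL _ _ q.2 p.2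
    have h3 : ⁅(q : L), y⁆ = -⁅y, (q : L)⁆ := (lie_skew _ _).symm
    have h4 : (c : L) = (c₀ : L) + ((X p : V) : L) + ((Y q : V) : L) := by
      have := congrArg (Subtype.val : V → L) hcdec.symm
      rw [hc₁eq] at this
      simpa [add_assoc] using this
    have h5 : (c : L) = ⁅x, y⁆ := rfl
    rw [h1, h2, h3, ← hXact, ← hYact, ← h5, h4]
    abel
  have hc₀K : c₀ ∈ genWeightSpace V (0 : E' → F) := hc₀
  -- bracket action on K elements
  have hB2 : ∀ v : V, v ∈ genWeightSpace V (0 : E' → F) →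
      ⁅xt, (v : L)⁆ = ((X v : V) : L) ∧ (X v) ∈ genWeightSpace V (0 : E' → F) := by
    intro v hv
    constructor
    · rw [hxt, add_lie, habL _ _ q.2 v.2, add_zero, hXact]
    · have := (genWeightSpace V (0 : E' → F)).lie_mem (x := (⟨X, hXE'⟩ : E')) hv
      rwa [hE'act] at this
  have hB3 : ∀ v : V, v ∈ genWeightSpace V (0 : E' → F) →
      ⁅yt, (v : L)⁆ = ((Y v : V) : L) ∧ (Y v) ∈ genWeightSpace V (0 : E' → F) := by
    intro v hv
    constructor
    · rw [hyt, sub_lie, habL _ _ p.2 v.2, sub_zero, hYact]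
    · have := (genWeightSpace V (0 : E' → F)).lie_mem (x := (⟨Y, hYE'⟩ : E')) hv
      rwa [hE'act] at this
  -- the subalgebra witnessing non-A-ness
  set K := genWeightSpace V (0 : E' → F) with hKdef
  let Kh : Submodule F L :=
    { carrier := {m : L | ∃ h : m ∈ V, (⟨m, h⟩ : V) ∈ K}
      add_mem' := by
        rintro m n ⟨hm, hmK⟩ ⟨hn, hnK⟩
        exact ⟨V.add_mem hm hn, K.add_mem hmK hnK⟩
      zero_mem' := ⟨V.zero_mem, K.zero_mem⟩
      smul_mem' := by
        rintro t m ⟨hm, hmK⟩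
        exact ⟨V.smul_mem t hm, K.smul_mem t hmK⟩ }
  have hKhmem : ∀ v : V, v ∈ K → (v : L) ∈ Kh := fun v hv => ⟨v.2, hv⟩
  set P : Submodule F L := (Submodule.span F {xt} ⊔ Submodule.span F {yt}) ⊔ Kh with hP
  have hrep : ∀ u ∈ P, ∃ (α β : F) (v : V), v ∈ K ∧ u = α • xt + β • yt + (v : L) := by
    intro u hu
    rcases Submodule.mem_sup.mp hu with ⟨u1, hu1, kk, hkk, rfl⟩
    rcases Submodule.mem_sup.mp hu1 with ⟨ux, hux, uy, huy, rfl⟩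
    rcases Submodule.mem_span_singleton.mp hux with ⟨α, rfl⟩
    rcases Submodule.mem_span_singleton.mp huy with ⟨β, rfl⟩
    rcases hkk with ⟨hkkV, hkkK⟩
    exact ⟨α, β, ⟨kk, hkkV⟩, hkkK, rfl⟩
  have hxtP : ∀ u ∈ P, ⁅xt, u⁆ ∈ Kh := by
    intro u hu
    obtain ⟨α, β, v, hvK, rfl⟩ := hrep u hu
    have hcalc : ⁅xt, α • xt + β • yt + (v : L)⁆ = β • (c₀ : L) + ((X v : V) : L) := by
      simp only [lie_add, lie_smul, lie_self, smul_zero, zero_add, hB1, (hB2 v hvK).1]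
    rw [hcalc]
    refine Kh.add_mem (Kh.smul_mem β ?_) (hKhmem _ (hB2 v hvK).2)
    exact hKhmem c₀ hc₀K
  have hytP : ∀ u ∈ P, ⁅yt, u⁆ ∈ Kh := by
    intro u hu
    obtain ⟨α, β, v, hvK, rfl⟩ := hrep u hu
    have hyx : ⁅yt, xt⁆ = -(c₀ : L) := by rw [← lie_skew, hB1]
    have hcalc : ⁅yt, α • xt + β • yt + (v : L)⁆ = α • (-(c₀ : L)) + ((Y v : V) : L) := by
      simp only [lie_add, lie_smul, lie_self, smul_zero, add_zero, hyx, (hB3 v hvK).1]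
    rw [hcalc]
    refine Kh.add_mem (Kh.smul_mem α (Kh.neg_mem ?_)) (hKhmem _ (hB3 v hvK).2)
    exact hKhmem c₀ hc₀K
  have hKhP : ∀ kk ∈ Kh, ∀ u ∈ P, ⁅kk, u⁆ ∈ Kh := by
    rintro kk ⟨hkV, hkK⟩ u hu
    obtain ⟨α, β, v, hvK, rfl⟩ := hrep u hu
    set w : V := ⟨kk, hkV⟩ with hw
    have h1 : ⁅kk, xt⁆ = -((X w : V) : L) := by
      rw [← lie_skew, (hB2 w hkK).1]
    have h2 : ⁅kk, yt⁆ = -((Y w : V) : L) := by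
      rw [← lie_skew, (hB3 w hkK).1]
    have h3 : ⁅kk, (v : L)⁆ = 0 := habL _ _ hkV v.2
    have hcalc : ⁅kk, α • xt + β • yt + (v : L)⁆ =
        α • (-((X w : V) : L)) + β • (-((Y w : V) : L)) := by
      simp only [lie_add, lie_smul, h1, h2, h3, add_zero]
    rw [hcalc]
    exact Kh.add_mem (Kh.smul_mem α (Kh.neg_mem (hKhmem _ (hB2 w hkK).2)))
      (Kh.smul_mem β (Kh.neg_mem (hKhmem _ (hB3 w hkK).2)))
  have hPP : ∀ u ∈ P, ∀ u' ∈ P, ⁅u, u'⁆ ∈ Kh := by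
    intro u hu u' hu'
    obtain ⟨α, β, v, hvK, rfl⟩ := hrep u hu
    have hcalc : ⁅α • xt + β • yt + (v : L), u'⁆ =
        α • ⁅xt, u'⁆ + β • ⁅yt, u'⁆ + ⁅(v : L), u'⁆ := by
      simp only [add_lie, smul_lie]
    rw [hcalc]
    exact Kh.add_mem (Kh.add_mem (Kh.smul_mem α (hxtP u' hu')) (Kh.smul_mem β (hytP u' hu')))
      (hKhP _ (hKhmem v hvK) u' hu')
  let U : LieSubalgebra F L :=
    { toSubmodule := P
      lie_mem' := fun {u w} hu hw => Submodule.mem_sup_right (hPP u hu w hw) }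
  have hUmem : ∀ m : L, m ∈ U ↔ m ∈ P := fun m => Iff.rfl
  -- U is nilpotent
  have hUnil : LieRing.IsNilpotent U := by
    rw [LieAlgebra.isNilpotent_iff_forall (R := F)]
    intro u
    obtain ⟨α, β, v, hvK, hval⟩ := hrep u.1 u.2
    set e : Module.End F V := α • X + β • Y with he
    have heE' : e ∈ E' := Submodule.mem_span_pair.mpr ⟨α, β, rfl⟩
    obtain ⟨k, hker⟩ :=
      LieModule.exists_genWeightSpace_zero_le_ker_of_isNoetherian F V (⟨e, heE'⟩ : E')
    have hbr : ∀ w : V, w ∈ K → ⁅(u : L), (w : L)⁆ = ((e w : V) : L) ∧ e w ∈ K := by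
      intro w hw
      constructor
      · rw [hval]
        have h1 : ⁅α • xt + β • yt + (v : L), (w : L)⁆ =
            α • ⁅xt, (w : L)⁆ + β • ⁅yt, (w : L)⁆ + ⁅(v : L), (w : L)⁆ := by
          simp only [add_lie, smul_lie]
        rw [h1, (hB2 w hw).1, (hB3 w hw).1, habL _ _ v.2 w.2, add_zero, he]
        simp
      · have := K.lie_mem (x := (⟨e, heE'⟩ : E')) hw
        rwa [hE'act] at this
    have claim : ∀ (j : ℕ) (w : U) (wv : V), wv ∈ K → (w : L) = (wv : L) →
        (((LieAlgebra.ad F U u) ^ j) w : L) = (((e ^ j) wv : V) : L) := by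
      intro j
      induction j with
      | zero => intro w wv _ hweq; simpa using hweq
      | succ j ih =>
        intro w wv hwv hweq
        have hstep : (LieAlgebra.ad F U u) w = ⁅u, w⁆ := rfl
        have hval2 : ((⁅u, w⁆ : U) : L) = ((e wv : V) : L) := by
          have : ((⁅u, w⁆ : U) : L) = ⁅(u : L), (w : L)⁆ := rfl
          rw [this, hweq]
          exact (hbr wv hwv).1
        have hmemK : e wv ∈ K := (hbr wv hwv).2
        have hpow : ((LieAlgebra.ad F U u) ^ (j + 1)) w =
            ((LieAlgebra.ad F U u) ^ j) ((LieAlgebra.ad F U u) w) := by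
          rw [pow_succ, Module.End.mul_apply]
        rw [hpow, hstep]
        have := ih ⁅u, w⁆ (e wv) hmemK hval2
        rw [this, pow_succ, Module.End.mul_apply]
    refine ⟨k + 1, ?_⟩
    ext w
    have hpow : ((LieAlgebra.ad F U u) ^ (k + 1)) w =
        ((LieAlgebra.ad F U u) ^ k) ((LieAlgebra.ad F U u) w) := by
      rw [pow_succ, Module.End.mul_apply]
    have hw1 : ((⁅u, w⁆ : U) : L) ∈ Kh := hPP u.1 u.2 w.1 w.2
    obtain ⟨h1, h1K⟩ := hw1
    have hcl := claim k ⁅u, w⁆ ⟨((⁅u, w⁆ : U) : L), h1⟩ h1K rfl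
    have hek : ((e ^ k) (⟨((⁅u, w⁆ : U) : L), h1⟩ : V)) = 0 := by
      have hmem := hker h1K
      rw [LinearMap.mem_ker] at hmem
      exact hmem
    have hstep : (LieAlgebra.ad F U u) w = ⁅u, w⁆ := rfl
    show (((LieAlgebra.ad F U u) ^ (k + 1)) w : L) = (((0 : Module.End F U) w : U) : L)
    rw [hpow, hstep, hcl, hek]
    simp
  -- contradiction
  have habU : IsLieAbelian U := hA U hUnil
  have hxtU : xt ∈ U := Submodule.mem_sup_left
    (Submodule.mem_sup_left (Submodule.mem_span_singleton_self xt))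
  have hytU : yt ∈ U := Submodule.mem_sup_left
    (Submodule.mem_sup_right (Submodule.mem_span_singleton_self yt))
  have h0 : ⁅xt, yt⁆ = (0 : L) :=
    congrArg Subtype.val (habU.trivial ⟨xt, hxtU⟩ ⟨yt, hytU⟩)
  rw [hB1] at h0
  have hc₀0 : c₀ = 0 := Subtype.ext h0
  have hcc : c = c₁ := by rw [← hcdec, hc₀0, zero_add]
  exact hxy (hcc ▸ h1'le1 c₁ hc₁)

end Aux

theorem minimal_ideal_location (F L : Type*) [Field F] [LieRing L] [LieAlgebra F L]
    [FiniteDimensional F L] (hA : IsAAlgebra F L)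
    (hss : LieRing.IsNilpotent (LieAlgebra.derivedSeries F L 1))
    (A : LieIdeal F L) (hAne : A ≠ ⊥)
    (hAmin : ∀ I : LieIdeal F L, I ≤ A → I = ⊥ ∨ I = A) :
    (A ≤ LieAlgebra.derivedSeries F L 1 ∨ A ≤ LieAlgebra.center F L) ∧
    (A ≤ LieAlgebra.derivedSeries F L 1 ↔ ⁅(⊤ : LieIdeal F L), A⁆ = A) := by
  have hle : ⁅(⊤ : LieIdeal F L), A⁆ ≤ A := LieSubmodule.lie_le_right _ _
  have hDS : A ≤ LieAlgebra.derivedSeries F L 1 → ⁅(⊤ : LieIdeal F L), A⁆ ≠ ⊥ := by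
    intro hAle hbot
    exact crux_aux hA hss A hAne hAle hbot
  rcases hAmin ⁅(⊤ : LieIdeal F L), A⁆ hle with hbot | heq
  · -- A is central
    have hAc : A ≤ LieAlgebra.center F L := by
      intro m hm
      show m ∈ LieModule.maxTrivSubmodule F L L
      rw [LieModule.mem_maxTrivSubmodule]
      intro z
      have h : ⁅z, m⁆ ∈ (⁅(⊤ : LieIdeal F L), A⁆ : LieIdeal F L) :=
        LieSubmodule.lie_mem_lie (LieSubmodule.mem_top z) hm
      rw [hbot] at h
      exact h
    refine ⟨Or.inr hAc, ?_, ?_⟩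
    · intro hAle
      exact absurd hbot (hDS hAle)
    · intro hTA
      exact (hAne (hTA.symm.trans hbot)).elim
  · -- ⁅⊤, A⁆ = A
    have hAle : A ≤ LieAlgebra.derivedSeries F L 1 := by
      rw [LieAlgebra.derivedSeries_def, LieAlgebra.derivedSeriesOfIdeal_succ,
        LieAlgebra.derivedSeriesOfIdeal_zero]
      rw [← heq]
      exact LieSubmodule.mono_lie le_top le_top
    exact ⟨Or.inl hAle, fun _ => heq, fun _ => hAle⟩
end

section
/- Let L be a finite-dimensional metabelian Lie algebra over a field F (i.e., [[L,L],[L,L]] = 0), and let U be a maximal nilpotent subalgebra of L. Then U ∩ [L, L] is an abelian ideal of L, and there exists an ideal K of L such that [L, L] = (U ∩ [L, L]) + K, (U ∩ [L, L]) ∩ K = 0, and [U, K] = K. -/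
lemma aux_coe_ad_pow {F L : Type*} [Field F] [LieRing L] [LieAlgebra F L]
    (H : LieSubalgebra F L) (u w : H) (k : ℕ) :
    (((LieAlgebra.ad F H u ^ k) w : H) : L) = (LieAlgebra.ad F L (u : L) ^ k) (w : L) := by
  induction k with
  | zero => rfl
  | succ k ih =>
    rw [pow_succ', pow_succ', Module.End.mul_apply, Module.End.mul_apply, LieAlgebra.ad_apply,
      LieAlgebra.ad_apply, LieSubalgebra.coe_bracket, ih]

lemma aux_coe_toEnd_pow {F L : Type*} [Field F] [LieRing L] [LieAlgebra F L]
    (U : LieSubalgebra F L) (D : LieSubmodule F L L) (u : U) (m : D) (k : ℕ) :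
    (((LieModule.toEnd F U D u ^ k) m : D) : L) = (LieAlgebra.ad F L (u : L) ^ k) (m : L) := by
  induction k with
  | zero => rfl
  | succ k ih =>
    rw [pow_succ', pow_succ', Module.End.mul_apply, Module.End.mul_apply,
      LieModule.toEnd_apply_apply, LieAlgebra.ad_apply, LieSubalgebra.coe_bracket_of_module,
      LieSubmodule.coe_bracket, ih]

theorem metabelian_max_nilpotent_subalgebra (F L : Type*) [Field F] [LieRing L] [LieAlgebra F L]
    [FiniteDimensional F L] (hmeta : LieAlgebra.derivedSeries F L 2 = ⊥)
    (U : LieSubalgebra F L) (hUnil : LieRing.IsNilpotent U)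
    (hUmax : ∀ V : LieSubalgebra F L, LieRing.IsNilpotent V → U ≤ V → U = V) :
    (∃ I : LieIdeal F L,
        I.toSubmodule = U.toSubmodule ⊓ (LieAlgebra.derivedSeries F L 1).toSubmodule ∧
        IsLieAbelian I) ∧
    ∃ K : LieIdeal F L,
      (LieAlgebra.derivedSeries F L 1).toSubmodule =
          (U.toSubmodule ⊓ (LieAlgebra.derivedSeries F L 1).toSubmodule) ⊔ K.toSubmodule ∧
      (U.toSubmodule ⊓ (LieAlgebra.derivedSeries F L 1).toSubmodule) ⊓ K.toSubmodule = ⊥ ∧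
      Submodule.span F {x : L | ∃ u ∈ U, ∃ k ∈ K, ⁅u, k⁆ = x} = K.toSubmodule := by
  classical
  haveI := hUnil
  set D : LieIdeal F L := LieAlgebra.derivedSeries F L 1 with hDdef
  -- the derived algebra is abelian
  have hbr : ∀ x y : L, ⁅x, y⁆ ∈ D := by
    intro x y
    have : ⁅x, y⁆ ∈ ⁅(⊤ : LieIdeal F L), (⊤ : LieIdeal F L)⁆ :=
      LieSubmodule.lie_mem_lie (LieSubmodule.mem_top x) (LieSubmodule.mem_top y)
    simpa [hDdef, LieAlgebra.derivedSeries_def, LieAlgebra.derivedSeriesOfIdeal_succ,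
      LieAlgebra.derivedSeriesOfIdeal_zero] using this
  have habD : ∀ x ∈ D, ∀ y ∈ D, ⁅x, y⁆ = (0 : L) := by
    intro x hx y hy
    have h2 : ⁅x, y⁆ ∈ LieAlgebra.derivedSeries F L 2 := by
      have : LieAlgebra.derivedSeries F L 2 = ⁅D, D⁆ := by
        rw [hDdef, LieAlgebra.derivedSeries_def, LieAlgebra.derivedSeries_def,
          LieAlgebra.derivedSeriesOfIdeal_succ]
      rw [this]
      exact LieSubmodule.lie_mem_lie hx hy
    rw [hmeta] at h2
    simpa using h2
  -- modules setup
  set M₀ : LieSubmodule F U D := LieModule.genWeightSpace D (0 : U → F) with hM₀def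
  set M₁ : LieSubmodule F U D := LieModule.posFittingComp F U D with hM₁def
  have hcompl : IsCompl M₀ M₁ := LieModule.isCompl_genWeightSpace_zero_posFittingComp F U D
  set e : D →ₗ[F] L := (D : LieSubmodule F L L).toSubmodule.subtype with hedef
  set N₀ : Submodule F L := (M₀ : Submodule F ↥D).map e with hN₀def
  set K₀ : Submodule F L := (M₁ : Submodule F ↥D).map e with hK₀def
  -- the map `g y : D → D` induced by `ad y`, commuting with the `U`-action
  set g : L → (↥D →ₗ[F] ↥D) := fun y =>
    { toFun := fun m => ⟨⁅y, (m : L)⁆, D.lie_mem m.2⟩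
      map_add' := by intro a b; ext; simp
      map_smul' := by intro c a; ext; simp } with hgdef
  have hgcoe : ∀ (y : L) (m : ↥D), ((g y m : ↥D) : L) = ⁅y, (m : L)⁆ := fun y m => rfl
  have hgcomm : ∀ (y : L) (u : U), Commute (LieModule.toEnd F U (↥D) u) (g y) := by
    intro y u
    refine LinearMap.ext fun m => Subtype.ext ?_
    have h1 : ⁅(u : L), ⁅y, (m : L)⁆⁆ = ⁅⁅(u : L), y⁆, (m : L)⁆ + ⁅y, ⁅(u : L), (m : L)⁆⁆ :=
      leibniz_lie _ _ _
    rw [habD _ (hbr (u : L) y) _ m.2, zero_add] at h1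
    simp only [Module.End.mul_apply]
    rw [hgcoe, LieModule.toEnd_apply_apply, LieModule.toEnd_apply_apply,
      LieSubalgebra.coe_bracket_of_module, LieSubalgebra.coe_bracket_of_module,
      LieSubmodule.coe_bracket, LieSubmodule.coe_bracket, hgcoe, h1]
  have hg0 : ∀ (y : L) (m : ↥D), m ∈ M₀ → g y m ∈ M₀ := by
    intro y m hm
    rw [hM₀def, LieModule.mem_genWeightSpace] at hm ⊢
    intro u
    obtain ⟨k, hk⟩ := hm u
    refine ⟨k, ?_⟩
    simp only [Pi.zero_apply, zero_smul, sub_zero] at hk ⊢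
    rw [← Module.End.mul_apply, ((hgcomm y u).pow_left k).eq, Module.End.mul_apply, hk, map_zero]
  have hg1 : ∀ (y : L) (m : ↥D), m ∈ M₁ → g y m ∈ M₁ := by
    intro y m hm
    have hm' : m ∈ ⨆ u : U, ((LieModule.posFittingCompOf F (↥D) u : LieSubmodule F U ↥D) :
        Submodule F ↥D) := by
      rw [← LieSubmodule.iSup_toSubmodule]
      exact hm
    refine Submodule.iSup_induction _ (motive := fun m => g y m ∈ M₁) hm' ?_ (by simp) ?_
    · intro u n hn
      refine LieModule.posFittingCompOf_le_posFittingComp F U (↥D) u ?_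
      rw [LieSubmodule.mem_toSubmodule] at hn
      rw [LieModule.mem_posFittingCompOf] at hn ⊢
      intro k
      obtain ⟨p, hp⟩ := hn k
      exact ⟨g y p, by
        rw [← Module.End.mul_apply, ((hgcomm y u).pow_left k).eq, Module.End.mul_apply, hp]⟩
    · intro a b ha hb
      rw [map_add]
      exact M₁.add_mem ha hb
  -- basic facts about N₀ and K₀
  have hN₀D : N₀ ≤ D.toSubmodule := by rintro x ⟨m, hm, rfl⟩; exact m.2
  have hK₀D : K₀ ≤ D.toSubmodule := by rintro x ⟨m, hm, rfl⟩; exact m.2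
  have hUN₀ : ∀ u ∈ U, ∀ n ∈ N₀, ⁅u, n⁆ ∈ N₀ := by
    intro u hu n hn
    obtain ⟨m, hm, rfl⟩ := hn
    refine ⟨⁅(⟨u, hu⟩ : U), m⁆, M₀.lie_mem hm, ?_⟩
    show ((⁅(⟨u, hu⟩ : U), m⁆ : ↥D) : L) = _
    rw [LieSubalgebra.coe_bracket_of_module, LieSubmodule.coe_bracket]
    rfl
  have hUDle : U.toSubmodule ⊓ D.toSubmodule ≤ N₀ := by
    rintro x ⟨hxU, hxD⟩
    obtain ⟨a, ha⟩ := LieAlgebra.nilpotent_ad_of_nilpotent_algebra F (↥U)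
    have hmem : (⟨x, hxD⟩ : ↥D) ∈ M₀ := by
      rw [hM₀def, LieModule.mem_genWeightSpace]
      intro u
      refine ⟨a, ?_⟩
      simp only [Pi.zero_apply, zero_smul, sub_zero]
      have h1 : ((LieAlgebra.ad F (↥U) u ^ a) ⟨x, hxU⟩ : L) = 0 := by
        rw [ha u]; rfl
      have h2 := aux_coe_ad_pow U u ⟨x, hxU⟩ a
      rw [h1] at h2
      apply Subtype.ext
      rw [aux_coe_toEnd_pow U (D : LieSubmodule F L L) u ⟨x, hxD⟩ a]
      simp [← h2]
    exact ⟨⟨x, hxD⟩, hmem, rfl⟩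
  -- the subalgebra V = U ⊔ N₀
  have hVclosed : ∀ x ∈ U.toSubmodule ⊔ N₀, ∀ y ∈ U.toSubmodule ⊔ N₀,
      ⁅x, y⁆ ∈ U.toSubmodule ⊔ N₀ := by
    intro x hx y hy
    obtain ⟨u, hu, n, hn, rfl⟩ := Submodule.mem_sup.mp hx
    obtain ⟨u', hu', n', hn', rfl⟩ := Submodule.mem_sup.mp hy
    have h1 : ⁅u, u'⁆ ∈ U.toSubmodule := U.lie_mem hu hu'
    have h2 : ⁅u, n'⁆ ∈ N₀ := hUN₀ u hu n' hn'
    have h3 : ⁅n, u'⁆ ∈ N₀ := by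
      rw [← lie_skew]
      exact N₀.neg_mem (hUN₀ u' hu' n hn)
    have h4 : ⁅n, n'⁆ = (0 : L) := habD _ (hN₀D hn) _ (hN₀D hn')
    have h5 : ⁅u + n, u' + n'⁆ = ⁅u, u'⁆ + (⁅u, n'⁆ + ⁅n, u'⁆) := by
      rw [add_lie, lie_add, lie_add, h4]; abel
    rw [h5]
    exact Submodule.add_mem _ (Submodule.mem_sup_left h1)
      (Submodule.mem_sup_right (N₀.add_mem h2 h3))
  set V : LieSubalgebra F L :=
    { toSubmodule := U.toSubmodule ⊔ N₀
      lie_mem' := fun hx hy => hVclosed _ hx _ hy } with hVdef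
  -- nilpotency of V
  have hinv : ∀ u ∈ U, ∀ n ∈ N₀, ∀ x ∈ N₀, ⁅u + n, x⁆ ∈ N₀ := by
    intro u hu n hn x hx
    rw [add_lie, habD _ (hN₀D hn) _ (hN₀D hx), add_zero]
    exact hUN₀ u hu x hx
  have hinvpow : ∀ u ∈ U, ∀ n ∈ N₀, ∀ (j : ℕ), ∀ x ∈ N₀,
      (LieAlgebra.ad F L (u + n) ^ j) x ∈ N₀ := by
    intro u hu n hn j
    induction j with
    | zero => intro x hx; simpa using hx
    | succ j ih =>
      intro x hx
      rw [pow_succ, Module.End.mul_apply]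
      refine ih _ ?_
      rw [LieAlgebra.ad_apply]
      exact hinv u hu n hn x hx
  have hstepA : ∀ u, ∀ hu : u ∈ U, ∀ n ∈ N₀, ∃ a : ℕ, ∀ x ∈ U.toSubmodule ⊔ N₀,
      (LieAlgebra.ad F L (u + n) ^ a) x ∈ N₀ := by
    intro u hu n hn
    obtain ⟨a, ha⟩ := LieAlgebra.nilpotent_ad_of_nilpotent_algebra F (↥U)
    have claim : ∀ (j : ℕ) (w : U), (LieAlgebra.ad F L (u + n) ^ j) (w : L) -
        ((LieAlgebra.ad F (↥U) ⟨u, hu⟩ ^ j) w : L) ∈ N₀ := by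
      intro j
      induction j with
      | zero => intro w; simp
      | succ j ih =>
        intro w
        rw [pow_succ', Module.End.mul_apply, pow_succ', Module.End.mul_apply]
        set s := (LieAlgebra.ad F L (u + n) ^ j) (w : L) with hs
        set t := (LieAlgebra.ad F (↥U) ⟨u, hu⟩ ^ j) w with ht
        have hst : s - (t : L) ∈ N₀ := ih w
        have hcoe : ((LieAlgebra.ad F (↥U) ⟨u, hu⟩ t : ↥U) : L) = ⁅u, (t : L)⁆ := by
          rw [LieAlgebra.ad_apply, LieSubalgebra.coe_bracket]
        rw [LieAlgebra.ad_apply, hcoe]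
        have e1 : ⁅u + n, s⁆ - ⁅u, (t : L)⁆ = ⁅u + n, s - (t : L)⁆ + ⁅n, (t : L)⁆ := by
          rw [lie_sub, add_lie, add_lie]; abel
        rw [e1]
        refine N₀.add_mem (hinv u hu n hn _ hst) ?_
        rw [← lie_skew]
        exact N₀.neg_mem (hUN₀ (t : L) t.2 n hn)
    refine ⟨a, ?_⟩
    intro x hx
    obtain ⟨w, hw, n', hn', rfl⟩ := Submodule.mem_sup.mp hx
    rw [map_add]
    refine N₀.add_mem ?_ (hinvpow u hu n hn a n' hn')
    have h6 := claim a ⟨w, hw⟩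
    rw [ha ⟨u, hu⟩] at h6
    simpa using h6
  have hstepB : ∀ u, ∀ hu : u ∈ U, ∀ n ∈ N₀, ∀ x ∈ N₀,
      ∃ b : ℕ, (LieAlgebra.ad F L (u + n) ^ b) x = 0 := by
    intro u hu n hn x hx
    obtain ⟨m, hm, rfl⟩ := hx
    have hm' : m ∈ LieModule.genWeightSpace (↥D) (0 : U → F) := hm
    rw [LieModule.mem_genWeightSpace] at hm'
    obtain ⟨b, hb⟩ := hm' ⟨u, hu⟩
    simp only [Pi.zero_apply, zero_smul, sub_zero] at hb
    refine ⟨b, ?_⟩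
    have h5 : ∀ zm : ↥D, (LieAlgebra.ad F L (u + n)) (e zm) =
        e (⁅(⟨u, hu⟩ : U), zm⁆) := by
      intro zm
      rw [LieAlgebra.ad_apply, add_lie]
      have hz : ⁅n, e zm⁆ = 0 := habD _ (hN₀D hn) _ zm.2
      rw [hz, add_zero]
      show _ = ((⁅(⟨u, hu⟩ : U), zm⁆ : ↥D) : L)
      rw [LieSubalgebra.coe_bracket_of_module, LieSubmodule.coe_bracket]
      rfl
    have key : ∀ (j : ℕ) (zm : ↥D), (LieAlgebra.ad F L (u + n) ^ j) (e zm) =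
        e ((LieModule.toEnd F (↥U) (↥D) ⟨u, hu⟩ ^ j) zm) := by
      intro j
      induction j with
      | zero => intro zm; rfl
      | succ j ih =>
        intro zm
        rw [pow_succ, Module.End.mul_apply, pow_succ, Module.End.mul_apply]
        rw [h5 zm, ih]
        rfl
    rw [key b m, hb, map_zero]
  have hVnil : LieRing.IsNilpotent (↥V) := by
    rw [LieAlgebra.isNilpotent_iff_forall (R := F)]
    intro v
    rw [Module.End.isNilpotent_iff_of_finite]
    intro w
    obtain ⟨u, hu, n, hn, hv⟩ := Submodule.mem_sup.mp v.2
    obtain ⟨a, haA⟩ := hstepA u hu n hn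
    obtain ⟨b, hb⟩ := hstepB u hu n hn _ (haA (w : L) w.2)
    refine ⟨b + a, ?_⟩
    apply Subtype.ext
    rw [aux_coe_ad_pow V v w (b + a)]
    have hv' : (v : L) = u + n := hv.symm
    rw [hv', pow_add, Module.End.mul_apply, hb]
    rfl
  have hUV : U = V := hUmax V hVnil (fun x hx => Submodule.mem_sup_left hx)
  have hN₀U : N₀ ≤ U.toSubmodule := by
    intro x hx
    have hxV : x ∈ V := Submodule.mem_sup_right hx
    rw [← hUV] at hxV
    exact hxV
  have hUD : U.toSubmodule ⊓ D.toSubmodule = N₀ := le_antisymm hUDle (le_inf hN₀U hN₀D)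
  -- the ideals
  have hIdealN : ∀ (y x : L), x ∈ N₀ → ⁅y, x⁆ ∈ N₀ := by
    rintro y x ⟨m, hm, rfl⟩
    exact ⟨g y m, hg0 y m hm, rfl⟩
  have hIdealK : ∀ (y x : L), x ∈ K₀ → ⁅y, x⁆ ∈ K₀ := by
    rintro y x ⟨m, hm, rfl⟩
    exact ⟨g y m, hg1 y m hm, rfl⟩
  constructor
  · refine ⟨{ toSubmodule := U.toSubmodule ⊓ D.toSubmodule
              lie_mem := fun {y x} hx => by
                rw [hUD] at hx ⊢
                exact hIdealN y x hx }, rfl, ?_⟩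
    constructor
    intro a b
    apply Subtype.ext
    show ⁅(a : L), (b : L)⁆ = _
    rw [habD _ a.2.2 _ b.2.2]
    rfl
  · refine ⟨{ toSubmodule := K₀
              lie_mem := fun {y x} hx => hIdealK y x hx }, ?_, ?_, ?_⟩
    · rw [hUD]
      have hsup : (M₀ : Submodule F ↥D) ⊔ (M₁ : Submodule F ↥D) = ⊤ := by
        rw [← LieSubmodule.sup_toSubmodule, codisjoint_iff.mp hcompl.codisjoint]
        rfl
      have h7 := congrArg (Submodule.map e) hsup
      rw [Submodule.map_sup, Submodule.map_top, Submodule.range_subtype] at h7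
      exact h7.symm
    · rw [hUD]
      have hdis : (M₀ : Submodule F ↥D) ⊓ (M₁ : Submodule F ↥D) = ⊥ := by
        rw [← LieSubmodule.inf_toSubmodule, disjoint_iff.mp hcompl.disjoint]
        rfl
      show N₀ ⊓ K₀ = ⊥
      rw [hN₀def, hK₀def, ← Submodule.map_inf _ (Submodule.injective_subtype _), hdis,
        Submodule.map_bot]
    · apply le_antisymm
      · rw [Submodule.span_le]
        rintro x ⟨u, hu, k, hk, rfl⟩
        obtain ⟨m, hm, rfl⟩ := hk
        have hm' : m ∈ M₁ := hm
        refine ⟨⁅(⟨u, hu⟩ : U), m⁆, M₁.lie_mem hm', ?_⟩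
        show ((⁅(⟨u, hu⟩ : U), m⁆ : ↥D) : L) = _
        rw [LieSubalgebra.coe_bracket_of_module, LieSubmodule.coe_bracket]
        rfl
      · -- K₀ ≤ span
        have hK₀eq : K₀ = ⨆ u : U,
            ((LieModule.posFittingCompOf F (↥D) u : LieSubmodule F U ↥D) :
              Submodule F ↥D).map e := by
          rw [hK₀def, hM₁def, LieModule.posFittingComp, LieSubmodule.iSup_toSubmodule,
            Submodule.map_iSup]
        refine le_trans (le_of_eq hK₀eq) (iSup_le fun u => ?_)
        rintro x ⟨m, hm, rfl⟩
        have hm2 : m ∈ LieModule.posFittingCompOf F (↥D) u := hm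
        rw [LieModule.mem_posFittingCompOf] at hm2
        set f := LieModule.toEnd F (↥U) (↥D) u with hf
        obtain ⟨nn, hnn⟩ := Filter.eventually_atTop.mp f.eventually_iInf_range_pow_eq
        obtain ⟨p, hp⟩ := hm2 (nn + 1)
        have hq : (f ^ nn) p ∈ LieModule.posFittingCompOf F (↥D) u := by
          rw [LieModule.mem_posFittingCompOf]
          intro k
          have h8 : (f ^ nn) p ∈ LinearMap.range (f ^ nn) := ⟨p, rfl⟩
          rw [← hnn nn le_rfl] at h8
          have h9 := (Submodule.mem_iInf _).mp h8 k
          exact h9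
        have hx : e m = ⁅(u : L), e ((f ^ nn) p)⁆ := by
          rw [← hp, pow_succ', Module.End.mul_apply]
          show ((⁅u, (f ^ nn) p⁆ : ↥D) : L) = _
          rw [LieSubalgebra.coe_bracket_of_module, LieSubmodule.coe_bracket]
          rfl
        rw [hx]
        refine Submodule.subset_span ⟨(u : L), u.2, e ((f ^ nn) p), ?_, rfl⟩
        exact ⟨(f ^ nn) p, LieModule.posFittingCompOf_le_posFittingComp F U (↥D) u hq, rfl⟩
end

section
/- Let L be a finite-dimensional monolithic strongly solvable Lie A-algebra over a field F, and let U be a maximal nilpotent subalgebra of L. Then either U = [L, L] (as subsets of L) or U is a Cartan subalgebra of L. -/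
open LieAlgebra LieModule Module

section Helpers

variable {F L : Type*} [Field F] [LieRing L] [LieAlgebra F L]

private lemma findim_subalg [FiniteDimensional F L] (S : LieSubalgebra F L) :
    FiniteDimensional F S :=
  FiniteDimensional.of_injective (S.incl.toLinearMap)
    (fun a b h => Subtype.ext (by simpa using h))

private lemma findim_ideal [FiniteDimensional F L] (D : LieIdeal F L) :
    FiniteDimensional F D :=
  FiniteDimensional.of_injective (D.incl : D →ₗ[F] L) Subtype.coe_injective

/-- Engel wrapper: a subalgebra on which ambient `ad`-powers vanish is nilpotent. -/
private lemma subalg_nilpotent_of_ad_pow [FiniteDimensional F L] (S : LieSubalgebra F L)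
    (h : ∀ s ∈ S, ∃ k : ℕ, ∀ t ∈ S, ((ad F L s) ^ k) t = 0) :
    LieRing.IsNilpotent S := by
  haveI : FiniteDimensional F S := findim_subalg S
  rw [LieAlgebra.isNilpotent_iff_forall (R := F)]
  rintro ⟨s, hs⟩
  obtain ⟨k, hk⟩ := h s hs
  refine ⟨k, LinearMap.ext fun t => Subtype.ext ?_⟩
  rw [LinearMap.zero_apply, ZeroMemClass.coe_zero, LieSubalgebra.coe_ad_pow]
  exact hk t t.2

/-- The dichotomy: if `W` is the monolith and `D` an abelian ideal containing all
brackets, then every `y : L` acts on `D` either nilpotently or injectively. -/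
private lemma nilp_or_inj [FiniteDimensional F L] (W : LieIdeal F L) (hWne : W ≠ ⊥)
    (hWmono : ∀ I : LieIdeal F L, I ≠ ⊥ → W ≤ I)
    (D : LieIdeal F L) (hbr : ∀ a b : L, ⁅a, b⁆ ∈ D)
    (habD : ∀ a ∈ D, ∀ b ∈ D, ⁅a, b⁆ = (0 : L)) (y : L) :
    IsNilpotent (toEnd F L D y) ∨ Function.Injective (toEnd F L D y) := by
  haveI : FiniteDimensional F D := findim_ideal D
  set f := toEnd F L D y with hf
  -- single-step commutation of the action of any `z` with `f` on `D`
  have hc1 : ∀ (z : L) (v : D), f ⁅z, v⁆ = ⁅z, f v⁆ := by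
    intro z v
    apply Subtype.ext
    rw [hf]
    show ((⁅y, (⁅z, v⁆ : D)⁆ : D) : L) = ((⁅z, (⁅y, v⁆ : D)⁆ : D) : L)
    rw [LieSubmodule.coe_bracket, LieSubmodule.coe_bracket, LieSubmodule.coe_bracket,
      LieSubmodule.coe_bracket, leibniz_lie, habD _ (hbr y z) _ v.2, zero_add]
  have hcomm : ∀ (m : ℕ) (z : L) (v : D), (f ^ m) ⁅z, v⁆ = ⁅z, (f ^ m) v⁆ := by
    intro m z
    induction m with
    | zero => intro v; simp
    | succ n ih =>
      intro v
      rw [pow_succ', Module.End.mul_apply, Module.End.mul_apply, ih, hc1]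
  set N := finrank F D + 1 with hN
  have hkerstab : LinearMap.ker (f ^ (N + N)) = LinearMap.ker (f ^ N) :=
    (Module.End.ker_pow_eq_ker_pow_finrank_of_le (by omega)).trans
      (Module.End.ker_pow_eq_ker_pow_finrank_of_le (by omega)).symm
  set ι : D →ₗ[F] L := (D.incl : D →ₗ[F] L) with hι
  have hcoe : ∀ (z : L) (w : D), (⁅z, (w : L)⁆ : L) = ι ⁅z, w⁆ := fun z w => rfl
  -- the kernel, as an ideal of L
  set Ksub : Submodule F L := (LinearMap.ker (f ^ N)).map ι with hKsub
  have hKlie : ∀ {z m : L}, m ∈ Ksub → ⁅z, m⁆ ∈ Ksub := by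
    intro z m hm
    obtain ⟨u, hu, rfl⟩ := Submodule.mem_map.mp hm
    rw [show (ι u : L) = (u : L) from rfl, hcoe z u]
    refine Submodule.mem_map.mpr ⟨⁅z, u⁆, ?_, rfl⟩
    rw [LinearMap.mem_ker, hcomm N z u, LinearMap.mem_ker.mp hu, lie_zero]
  set K : LieIdeal F L := { Ksub with lie_mem := fun hm => hKlie hm } with hK
  have hKmem : ∀ {m : L}, m ∈ K ↔ m ∈ Ksub := fun {m} => Iff.rfl
  -- the range, as an ideal of L
  set Rsub : Submodule F L := (LinearMap.range (f ^ N)).map ι with hRsub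
  have hRlie : ∀ {z m : L}, m ∈ Rsub → ⁅z, m⁆ ∈ Rsub := by
    intro z m hm
    obtain ⟨u, hu, rfl⟩ := Submodule.mem_map.mp hm
    obtain ⟨v, rfl⟩ := hu
    rw [show (ι ((f ^ N) v) : L) = (((f ^ N) v : D) : L) from rfl, hcoe z _]
    refine Submodule.mem_map.mpr ⟨(f ^ N) ⁅z, v⁆, ⟨⁅z, v⁆, rfl⟩, ?_⟩
    rw [hcomm N z v]
  set Rid : LieIdeal F L := { Rsub with lie_mem := fun hm => hRlie hm } with hRid
  have hRmem : ∀ {m : L}, m ∈ Rid ↔ m ∈ Rsub := fun {m} => Iff.rfl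
  by_cases hRbot : Rid = ⊥
  · -- range trivial: f is nilpotent
    left
    refine ⟨N, LinearMap.ext fun v => ?_⟩
    have : ι ((f ^ N) v) ∈ Rsub := Submodule.mem_map.mpr ⟨(f ^ N) v, ⟨v, rfl⟩, rfl⟩
    have h0 : ι ((f ^ N) v) = 0 := by
      have := (hRmem.mpr this)
      rw [hRbot] at this
      exact (LieSubmodule.mem_bot _).mp this
    rw [LinearMap.zero_apply]
    exact Subtype.ext h0
  by_cases hKbot : K = ⊥
  · -- kernel trivial: f is injective
    right
    have hker : LinearMap.ker f = ⊥ := by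
      rw [Submodule.eq_bot_iff]
      intro v hv
      have hvN : (f ^ N) v = 0 := by
        rw [hN, pow_succ, Module.End.mul_apply, LinearMap.mem_ker.mp hv, map_zero]
      have : ι v ∈ Ksub := Submodule.mem_map.mpr ⟨v, LinearMap.mem_ker.mpr hvN, rfl⟩
      have h0 : ι v = 0 := by
        have := hKmem.mpr this
        rw [hKbot] at this
        exact (LieSubmodule.mem_bot _).mp this
      exact Subtype.ext h0
    exact LinearMap.ker_eq_bot.mp hker
  -- both nontrivial: contradiction with the monolith
  exfalso
  obtain ⟨w, hwW, hw0⟩ : ∃ w ∈ W, w ≠ 0 := by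
    by_contra h
    push_neg at h
    exact hWne (LieSubmodule.eq_bot_iff W |>.mpr h)
  have hwK : w ∈ Ksub := hKmem.mp (hWmono K hKbot hwW)
  have hwR : w ∈ Rsub := hRmem.mp (hWmono Rid hRbot hwW)
  obtain ⟨u, hu, huw⟩ := Submodule.mem_map.mp hwK
  obtain ⟨v', hv', hvw⟩ := Submodule.mem_map.mp hwR
  obtain ⟨v, rfl⟩ := hv'
  have huv : (f ^ N) v = u := Subtype.coe_injective (hvw.trans huw.symm)
  have : v ∈ LinearMap.ker (f ^ (N + N)) := by
    rw [LinearMap.mem_ker, pow_add, Module.End.mul_apply, huv, LinearMap.mem_ker.mp hu]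
  rw [hkerstab, LinearMap.mem_ker, huv] at this
  exact hw0 (by rw [← huw, this]; rfl)

end Helpers

theorem monolithic_max_nilpotent (F L : Type*) [Field F] [LieRing L] [LieAlgebra F L]
    [FiniteDimensional F L] (hA : IsAAlgebra F L)
    (hss : LieRing.IsNilpotent (LieAlgebra.derivedSeries F L 1))
    (W : LieIdeal F L) (hWne : W ≠ ⊥)
    (hWmono : ∀ I : LieIdeal F L, I ≠ ⊥ → W ≤ I)
    (U : LieSubalgebra F L) (hUnil : LieRing.IsNilpotent U)
    (hUmax : ∀ V : LieSubalgebra F L, LieRing.IsNilpotent V → U ≤ V → U = V) :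
    U.toSubmodule = (LieAlgebra.derivedSeries F L 1).toSubmodule ∨
      U.IsCartanSubalgebra := by
  classical
  by_cases hc : U.normalizer = U
  · exact Or.inr ⟨hUnil, hc⟩
  left
  set D : LieIdeal F L := LieAlgebra.derivedSeries F L 1 with hD
  -- all brackets lie in D
  have hDtop : D = ⁅(⊤ : LieIdeal F L), (⊤ : LieIdeal F L)⁆ := by
    rw [hD, LieAlgebra.derivedSeries_def, LieAlgebra.derivedSeriesOfIdeal_succ,
      LieAlgebra.derivedSeriesOfIdeal_zero]
  have hbr : ∀ a b : L, ⁅a, b⁆ ∈ D := by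
    intro a b
    rw [hDtop]
    exact LieSubmodule.lie_mem_lie (LieSubmodule.mem_top a) (LieSubmodule.mem_top b)
  -- U is abelian
  have habU : ∀ a ∈ U, ∀ b ∈ U, ⁅a, b⁆ = (0 : L) := by
    intro a ha b hb
    haveI := hA U hUnil
    have h0 : (⁅(⟨a, ha⟩ : U), (⟨b, hb⟩ : U)⁆ : U) = 0 := trivial_lie_zero _ _ _ _
    have h1 : ((⁅(⟨a, ha⟩ : U), (⟨b, hb⟩ : U)⁆ : U) : L) = 0 := by rw [h0]; rfl
    rw [LieSubalgebra.coe_bracket] at h1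
    exact h1
  -- D is abelian
  have habD : ∀ a ∈ D, ∀ b ∈ D, ⁅a, b⁆ = (0 : L) := by
    intro a ha b hb
    haveI : LieRing.IsNilpotent ((D : LieSubalgebra F L)) := hss
    haveI := hA (D : LieSubalgebra F L) this
    have h0 : (⁅(⟨a, ha⟩ : (D : LieSubalgebra F L)), (⟨b, hb⟩ : (D : LieSubalgebra F L))⁆ :
        (D : LieSubalgebra F L)) = 0 := trivial_lie_zero _ _ _ _
    have h1 : ((⁅(⟨a, ha⟩ : (D : LieSubalgebra F L)), (⟨b, hb⟩ : (D : LieSubalgebra F L))⁆ :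
        (D : LieSubalgebra F L)) : L) = 0 := by rw [h0]; rfl
    rw [LieSubalgebra.coe_bracket] at h1
    exact h1
  -- pick x in the normalizer, not in U
  obtain ⟨x, hxn, hxU⟩ : ∃ x, x ∈ U.normalizer ∧ x ∉ U := by
    have hle : U ≤ U.normalizer := U.le_normalizer
    have : ¬ U.normalizer ≤ U := fun h => hc (le_antisymm h hle)
    exact SetLike.not_le_iff_exists.mp this
  have hxnorm : ∀ u ∈ U, ⁅x, u⁆ ∈ U := (U.mem_normalizer_iff x).mp hxn
  -- `ad x` does not act nilpotently on U
  have hxnotnil : ¬ ∃ k : ℕ, ∀ u ∈ U, ((ad F L x) ^ k) u = 0 := by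
    rintro ⟨k, hk⟩
    -- build the subalgebra M = U + F x
    set Msub : Submodule F L := U.toSubmodule ⊔ (Submodule.span F {x}) with hMsub
    have hUM : ∀ u ∈ U, u ∈ Msub := fun u hu => Submodule.mem_sup_left hu
    have hxM : x ∈ Msub := Submodule.mem_sup_right (Submodule.mem_span_singleton_self x)
    have hMdec : ∀ m ∈ Msub, ∃ u ∈ U, ∃ α : F, m = u + α • x := by
      intro m hm
      obtain ⟨u, hu, z, hz, rfl⟩ := Submodule.mem_sup.mp hm
      obtain ⟨α, rfl⟩ := Submodule.mem_span_singleton.mp hz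
      exact ⟨u, hu, α, rfl⟩
    have hMbr : ∀ a ∈ Msub, ∀ b ∈ Msub, ⁅a, b⁆ ∈ U ∧ ⁅a, b⁆ ∈ D := by
      intro a ha b hb
      obtain ⟨u, hu, α, rfl⟩ := hMdec a ha
      obtain ⟨u', hu', β, rfl⟩ := hMdec b hb
      constructor
      · have h1 : ⁅u, u'⁆ ∈ U := U.lie_mem hu hu'
        have h2 : ⁅u, x⁆ ∈ U := by
          rw [← lie_skew]; exact U.neg_mem (hxnorm u hu)
        have h3 : ⁅x, u'⁆ ∈ U := hxnorm u' hu'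
        have hexp : ⁅u + α • x, u' + β • x⁆
            = (⁅u, u'⁆ + β • ⁅u, x⁆) + (α • ⁅x, u'⁆ + (α * β) • ⁅x, x⁆) := by
          simp only [add_lie, lie_add, smul_lie, lie_smul, smul_smul]
          module
        rw [hexp, lie_self, smul_zero, add_zero]
        exact U.add_mem (U.add_mem h1 (U.smul_mem β h2)) (U.smul_mem α h3)
      · exact hbr _ _
    set M : LieSubalgebra F L :=
      { Msub with lie_mem' := fun {a b} ha hb => hUM _ (hMbr a ha b hb).1 } with hM
    have hMmem : ∀ {m : L}, m ∈ M ↔ m ∈ Msub := fun {m} => Iff.rfl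
    -- M is nilpotent
    have hMnil : LieRing.IsNilpotent M := by
      apply subalg_nilpotent_of_ad_pow
      intro s hs
      obtain ⟨u, hu, α, rfl⟩ := hMdec s (hMmem.mp hs)
      refine ⟨k + 1, ?_⟩
      intro t ht
      -- step: on U ∩ D, ad (u + α x) acts as α • ad x and preserves U ∩ D
      have hstep : ∀ v, v ∈ U → v ∈ D → ⁅u + α • x, v⁆ = α • ⁅x, v⁆ ∧
          (⁅x, v⁆ ∈ U ∧ ⁅x, v⁆ ∈ D) := by
        intro v hvU hvD
        refine ⟨?_, hxnorm v hvU, hbr x v⟩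
        rw [add_lie, smul_lie, habU u hu v hvU, zero_add]
      have hw : ⁅u + α • x, t⁆ ∈ U ∧ ⁅u + α • x, t⁆ ∈ D :=
        hMbr _ (hMmem.mp hs) t (hMmem.mp ht)
      set w := ⁅u + α • x, t⁆ with hwdef
      have key : ∀ j : ℕ, ((ad F L (u + α • x)) ^ (j + 1)) t =
          α ^ j • ((ad F L x) ^ j) w ∧
          (((ad F L x) ^ j) w ∈ U ∧ ((ad F L x) ^ j) w ∈ D) := by
        intro j
        induction j with
        | zero =>
          refine ⟨by simp [hwdef], by simpa using hw.1, by simpa using hw.2⟩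
        | succ n ih =>
          obtain ⟨ih1, ih2, ih3⟩ := ih
          constructor
          · rw [pow_succ', Module.End.mul_apply, ih1, map_smul]
            rw [show (ad F L (u + α • x)) (((ad F L x) ^ n) w) = α • ⁅x, ((ad F L x) ^ n) w⁆
              from by simpa using (hstep _ ih2 ih3).1]
            rw [smul_smul, pow_succ, mul_comm, pow_succ', Module.End.mul_apply]
            rfl
          · have := hstep _ ih2 ih3
            constructor
            · rw [pow_succ', Module.End.mul_apply]; exact this.2.1
            · rw [pow_succ', Module.End.mul_apply]; exact this.2.2
        
      rw [(key k).1, hk w hw.1, smul_zero]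
    have hUeqM : U = M := hUmax M hMnil (fun u hu => hUM u hu)
    exact hxU (by rw [hUeqM]; exact hMmem.mpr hxM)
  -- a nonzero element of the monolith
  obtain ⟨w₀, hw₀W, hw₀0⟩ : ∃ w ∈ W, w ≠ 0 := by
    by_contra h
    push_neg at h
    exact hWne (LieSubmodule.eq_bot_iff W |>.mpr h)
  -- the action of x on D
  haveI : FiniteDimensional F D := findim_ideal D
  set f := toEnd F L D x with hf
  have hfcoe : ∀ (v : D) (m : ℕ), (((f ^ m) v : D) : L) = ((ad F L x) ^ m) (v : L) := by
    intro v m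
    rw [hf]
    exact LieSubmodule.coe_toEnd_pow F L L D x v m
  have hfnotnil : ¬ IsNilpotent f := by
    rintro ⟨k, hk⟩
    apply hxnotnil
    refine ⟨k + 1, fun u hu => ?_⟩
    have hxu : ⁅x, u⁆ ∈ D := hbr x u
    have hsplit : ((ad F L x) ^ (k + 1)) u = ((ad F L x) ^ k) ⁅x, u⁆ := by
      rw [pow_succ, Module.End.mul_apply]; rfl
    rw [hsplit, ← hfcoe ⟨⁅x, u⁆, hxu⟩ k, hk, LinearMap.zero_apply, ZeroMemClass.coe_zero]
  have hfinj : Function.Injective f :=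
    (nilp_or_inj W hWne hWmono D hbr habD x).resolve_left hfnotnil
  -- a nonzero element of U ∩ D of the form ⁅x, u₀⁆
  obtain ⟨u₀, hu₀U, hw0⟩ : ∃ u₀ ∈ U, ⁅x, u₀⁆ ≠ 0 := by
    by_contra h
    push_neg at h
    refine hxnotnil ⟨1, fun u hu => ?_⟩
    rw [pow_one]
    exact h u hu
  set w : L := ⁅x, u₀⁆ with hwdef
  have hwU : w ∈ U := hxnorm u₀ hu₀U
  have hwD : w ∈ D := hbr x u₀
  have hDne : D ≠ ⊥ := by
    intro hbot
    rw [hbot] at hwD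
    exact hw0 ((LieSubmodule.mem_bot _).mp hwD)
  -- every element of U acts nilpotently on D
  have hUnilD : ∀ u ∈ U, IsNilpotent (toEnd F L D u) := by
    intro u hu
    rcases nilp_or_inj W hWne hWmono D hbr habD u with h | hinj
    · exact h
    · exfalso
      have h0 : toEnd F L D u ⟨w, hwD⟩ = 0 := by
        apply Subtype.ext
        show ⁅u, w⁆ = (0 : L)
        exact habU u hu w hwU
      have h00 := hinj (h0.trans (map_zero (toEnd F L D u)).symm)
      exact hw0 (by simpa using congrArg Subtype.val h00)
  -- S = U + D is a nilpotent subalgebra, so D ≤ U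
  set Ssub : Submodule F L := U.toSubmodule ⊔ (LieSubmodule.toSubmodule D) with hSsub
  have hUS : ∀ u ∈ U, u ∈ Ssub := fun u hu => Submodule.mem_sup_left hu
  have hDS : ∀ a ∈ D, a ∈ Ssub := fun a ha => Submodule.mem_sup_right ha
  set S : LieSubalgebra F L := { Ssub with lie_mem' := fun {a b} _ _ => hDS _ (hbr a b) }
    with hS
  have hSmem : ∀ {m : L}, m ∈ S ↔ m ∈ Ssub := fun {m} => Iff.rfl
  have hSnil : LieRing.IsNilpotent S := by
    apply subalg_nilpotent_of_ad_pow
    intro s hs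
    obtain ⟨u, hu, a, ha, rfl⟩ : ∃ u ∈ U.toSubmodule, ∃ a ∈ LieSubmodule.toSubmodule D,
        u + a = s := Submodule.mem_sup.mp (hSmem.mp hs)
    have huU : u ∈ U := hu
    have haD : a ∈ D := ha
    obtain ⟨m, hm⟩ := hUnilD u huU
    have hmamb : ∀ v, v ∈ D → ((ad F L u) ^ m) v = 0 := by
      intro v hv
      have := LieSubmodule.coe_toEnd_pow F L L D u ⟨v, hv⟩ m
      rw [hm, LinearMap.zero_apply, ZeroMemClass.coe_zero] at this
      exact this.symm
    refine ⟨m + 1, fun t ht => ?_⟩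
    have hbD : ⁅u + a, t⁆ ∈ D := hbr _ _
    have key : ∀ j : ℕ, ((ad F L (u + a)) ^ (j + 1)) t = ((ad F L u) ^ j) ⁅u + a, t⁆ ∧
        ((ad F L u) ^ j) ⁅u + a, t⁆ ∈ D := by
      intro j
      induction j with
      | zero => exact ⟨by simp, by simpa using hbD⟩
      | succ n ih =>
        obtain ⟨ih1, ih2⟩ := ih
        have hstep : ⁅u + a, ((ad F L u) ^ n) ⁅u + a, t⁆⁆ =
            (ad F L u) (((ad F L u) ^ n) ⁅u + a, t⁆) := by
          rw [add_lie, habD a haD _ ih2, add_zero]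
          rfl
        constructor
        · rw [pow_succ', Module.End.mul_apply, ih1]
          rw [show (ad F L (u + a)) (((ad F L u) ^ n) ⁅u + a, t⁆) =
            ⁅u + a, ((ad F L u) ^ n) ⁅u + a, t⁆⁆ from rfl, hstep, pow_succ',
            Module.End.mul_apply]
        · rw [pow_succ', Module.End.mul_apply]
          exact D.lie_mem ih2
    rw [(key m).1]
    exact hmamb _ hbD
  have hUeqS : U = S := hUmax S hSnil (fun u hu => hUS u hu)
  have hDU : ∀ a ∈ D, a ∈ U := fun a ha => by rw [hUeqS]; exact hSmem.mpr (hDS a ha)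
  have hWD : W ≤ D := hWmono D hDne
  -- surjectivity of f
  have hsurj : Function.Surjective f :=
    (LinearMap.injective_iff_surjective_of_finrank_eq_finrank rfl).mp hfinj
  -- U ≤ D
  have hUD : ∀ u ∈ U, u ∈ D := by
    intro u hu
    obtain ⟨av, hav⟩ := hsurj ⟨⁅x, u⁆, hbr x u⟩
    set a : L := (av : L) with hadef
    have haD : a ∈ D := av.2
    have hxa : ⁅x, a⁆ = ⁅x, u⁆ := by
      have := congrArg Subtype.val hav
      exact this
    have hu' : u - a ∈ U := U.sub_mem hu (hDU a haD)
    have hx0 : ⁅x, u - a⁆ = 0 := by rw [lie_sub, hxa, sub_self]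
    have hz : ∀ z : L, ⁅u - a, z⁆ = 0 := by
      intro z
      have hvD : ⁅u - a, z⁆ ∈ D := hbr _ _
      have hxv : ⁅x, ⁅u - a, z⁆⁆ = 0 := by
        rw [leibniz_lie, hx0, zero_lie, zero_add]
        exact habU _ hu' _ (hDU _ (hbr x z))
      have h0 : f ⟨⁅u - a, z⁆, hvD⟩ = 0 := by
        apply Subtype.ext
        show ⁅x, ⁅u - a, z⁆⁆ = (0 : L)
        exact hxv
      have h00 := hfinj (h0.trans (map_zero f).symm)
      simpa using congrArg Subtype.val h00
    by_cases h0 : u - a = 0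
    · have : u = a := by rwa [sub_eq_zero] at h0
      rw [this]; exact haD
    exfalso
    have hcen : u - a ∈ LieAlgebra.center F L := by
      rw [LieModule.mem_maxTrivSubmodule]
      intro z
      rw [← lie_skew, hz z, neg_zero]
    have hCne : LieAlgebra.center F L ≠ ⊥ := by
      intro hbot
      rw [hbot] at hcen
      exact h0 ((LieSubmodule.mem_bot _).mp hcen)
    have hWC : W ≤ LieAlgebra.center F L := hWmono _ hCne
    have hw₀C : ∀ z : L, ⁅z, w₀⁆ = 0 :=
      (LieModule.mem_maxTrivSubmodule F L L w₀).mp (hWC hw₀W)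
    have hfw₀ : f ⟨w₀, hWD hw₀W⟩ = 0 := by
      apply Subtype.ext
      show ⁅x, w₀⁆ = (0 : L)
      exact hw₀C x
    have := hfinj (hfw₀.trans (map_zero f).symm)
    exact hw₀0 (by simpa using congrArg Subtype.val this)
  exact le_antisymm (fun m hm => hUD m hm) (fun m hm => hDU m hm)
end

section
/- Let L be a finite-dimensional metabelian Lie algebra over a field F, and suppose there is a subalgebra B of L with [L, L] ∩ B = 0 and [L, L] + B = L such that [[L, L], b] = [L, L] for every nonzero b ∈ B (where [[L,L], b] denotes the image of [L,L] under ad b). Then L is a strongly solvable Lie A-algebra. -/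
theorem metabelian_fixed_point_free_is_A (F L : Type*) [Field F] [LieRing L] [LieAlgebra F L]
    [FiniteDimensional F L] (hmeta : LieAlgebra.derivedSeries F L 2 = ⊥)
    (B : LieSubalgebra F L)
    (hinf : (LieAlgebra.derivedSeries F L 1).toSubmodule ⊓ B.toSubmodule = ⊥)
    (hsup : (LieAlgebra.derivedSeries F L 1).toSubmodule ⊔ B.toSubmodule = ⊤)
    (hact : ∀ b ∈ B, b ≠ 0 →
      Submodule.map (LieAlgebra.ad F L b) (LieAlgebra.derivedSeries F L 1).toSubmodule =
        (LieAlgebra.derivedSeries F L 1).toSubmodule) :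
    LieRing.IsNilpotent (LieAlgebra.derivedSeries F L 1) ∧ IsAAlgebra F L := by
  set D := LieAlgebra.derivedSeries F L 1 with hDdef
  -- D is abelian
  have habD : ∀ x y : L, x ∈ D → y ∈ D → ⁅x, y⁆ = 0 := by
    intro x y hx hy
    have h2 : ⁅x, y⁆ ∈ LieAlgebra.derivedSeries F L 2 := by
      rw [LieAlgebra.derivedSeries_def, LieAlgebra.derivedSeriesOfIdeal_succ]
      exact LieSubmodule.lie_mem_lie (by rwa [← LieAlgebra.derivedSeries_def])
        (by rwa [← LieAlgebra.derivedSeries_def])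
    rw [hmeta] at h2
    simpa using h2
  have habD' : IsLieAbelian D := by
    constructor
    intro x y
    exact Subtype.ext (habD _ _ x.2 y.2)
  refine ⟨inferInstance, ?_⟩
  -- A-algebra part
  intro U hU
  constructor
  intro x y
  -- the bracket lands in D
  have hzD : (⁅(x : L), (y : L)⁆ : L) ∈ D := by
    rw [hDdef, LieAlgebra.derivedSeries_def, LieAlgebra.derivedSeriesOfIdeal_succ]
    exact LieSubmodule.lie_mem_lie (LieSubmodule.mem_top _) (LieSubmodule.mem_top _)
  by_cases hcase : ∀ u ∈ U, u ∈ D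
  · -- U ⊆ D, abelian
    have : (↑(⁅x, y⁆ : U) : L) = 0 := by
      rw [LieSubalgebra.coe_bracket]
      exact habD _ _ (hcase _ x.2) (hcase _ y.2)
    exact Subtype.ext this
  · push_neg at hcase
    obtain ⟨u, huU, huD⟩ := hcase
    -- decompose u = a + b with a ∈ D, b ∈ B, b ≠ 0
    have humem : u ∈ D.toSubmodule ⊔ B.toSubmodule := by rw [hsup]; trivial
    obtain ⟨a, ha, b, hb, hab⟩ := Submodule.mem_sup.mp humem
    have hbne : b ≠ 0 := by
      rintro rfl
      rw [add_zero] at hab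
      exact huD (hab ▸ (show a ∈ D from ha))
    have hmap := hact b hb hbne
    -- ad b maps D into D
    have hadb : ∀ z ∈ D, ⁅b, z⁆ ∈ D := by
      intro z hz
      have : LieAlgebra.ad F L b z ∈ Submodule.map (LieAlgebra.ad F L b) D.toSubmodule :=
        Submodule.mem_map_of_mem hz
      rw [hmap] at this
      simpa using this
    -- the restriction of ad b to D is injective
    have hrestrict : ∀ z ∈ D.toSubmodule, LieAlgebra.ad F L b z ∈ D.toSubmodule := hadb
    set g : D.toSubmodule →ₗ[F] D.toSubmodule := (LieAlgebra.ad F L b).restrict hrestrict with hg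
    have hgsurj : Function.Surjective g := by
      rintro ⟨w, hw⟩
      rw [← hmap] at hw
      obtain ⟨z, hz, hzw⟩ := hw
      exact ⟨⟨z, hz⟩, Subtype.ext hzw⟩
    have hginj : Function.Injective g := (LinearMap.injective_iff_surjective).mpr hgsurj
    have hinjb : ∀ z ∈ D, ⁅b, z⁆ = 0 → z = 0 := by
      intro z hz hbz
      have : g ⟨z, hz⟩ = 0 := Subtype.ext (by simpa [hg, LinearMap.restrict_apply] using hbz)
      have := hginj (a₁ := ⟨z, hz⟩) (a₂ := 0) (by simpa using this)
      simpa using congrArg Subtype.val this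
    -- ad u = ad b on D
    have hadu : ∀ z ∈ D, ⁅u, z⁆ = ⁅b, z⁆ := by
      intro z hz
      have haz : ⁅a, z⁆ = 0 := habD a z (by simpa using ha) hz
      rw [← hab, add_lie, haz, zero_add]
    -- key claim: (ad u)^n kills no nonzero element of D
    have hkey : ∀ n : ℕ, ∀ z ∈ D, ((LieAlgebra.ad F L u) ^ n) z = 0 → z = 0 := by
      intro n
      induction n with
      | zero => intro z _ h; simpa using h
      | succ n ih =>
        intro z hz h
        have hstep : ((LieAlgebra.ad F L u) ^ n) (⁅u, z⁆) = 0 := by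
          rw [← h, pow_succ, Module.End.mul_apply]
          rfl
        have hbzD : ⁅b, z⁆ ∈ D := hadb z hz
        have huzD : ⁅u, z⁆ ∈ D := by rw [hadu z hz]; exact hbzD
        have huz0 : ⁅u, z⁆ = 0 := ih _ huzD hstep
        exact hinjb z hz (by rw [← hadu z hz]; exact huz0)
    -- ad of u in U is nilpotent
    have hadUnil : IsNilpotent (LieAlgebra.ad F U ⟨u, huU⟩) :=
      LieModule.isNilpotent_toEnd_of_isNilpotent F U U ⟨u, huU⟩
    obtain ⟨n, hn⟩ := hadUnil
    -- transfer to L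
    have hzU : (⁅(x : L), (y : L)⁆ : L) ∈ U := by
      have := (⁅x, y⁆ : U).2
      simpa using this
    have htrans : ∀ m : ℕ, ∀ w : U,
        ((LieAlgebra.ad F L u) ^ m) (w : L) = ↑(((LieAlgebra.ad F U ⟨u, huU⟩) ^ m) w) := by
      intro m
      induction m with
      | zero => intro w; simp
      | succ m ihm =>
        intro w
        have h1 : ((LieAlgebra.ad F U ⟨u, huU⟩) ^ (m + 1)) w =
            ((LieAlgebra.ad F U ⟨u, huU⟩) ^ m) ((LieAlgebra.ad F U ⟨u, huU⟩) w) := by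
          rw [pow_succ, Module.End.mul_apply]
        have h2 : ((LieAlgebra.ad F L u) ^ (m + 1)) (w : L) =
            ((LieAlgebra.ad F L u) ^ m) ((LieAlgebra.ad F L u) (w : L)) := by
          rw [pow_succ, Module.End.mul_apply]
        rw [h1, h2, ← ihm ((LieAlgebra.ad F U ⟨u, huU⟩) w)]
        congr 1
    have hzero : ((LieAlgebra.ad F L u) ^ n) (⁅(x : L), (y : L)⁆) = 0 := by
      have := htrans n ⟨⁅(x : L), (y : L)⁆, hzU⟩
      rw [hn] at this
      simpa using this
    have : (⁅(x : L), (y : L)⁆ : L) = 0 := hkey n _ hzD hzero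
    exact Subtype.ext (by simpa [LieSubalgebra.coe_bracket] using this)
end

section
/- Let L be a finite-dimensional monolithic Lie algebra over a field F. Then L is a strongly solvable A-algebra if and only if L is metabelian and there exists a subalgebra B of L with [L, L] ∩ B = 0 and [L, L] + B = L such that [[L, L], b] = [L, L] for every nonzero b ∈ B (equivalently, ad b acts invertibly on [L, L] for every nonzero b ∈ B). -/
open LieAlgebra

section Aux
variable {F L : Type*} [Field F] [LieRing L] [LieAlgebra F L]

lemma mem_derived_one (x y : L) : ⁅x, y⁆ ∈ derivedSeries F L 1 := by
  rw [derivedSeries_def, derivedSeriesOfIdeal_succ, derivedSeriesOfIdeal_zero]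
  exact LieSubmodule.lie_mem_lie (LieSubmodule.mem_top x) (LieSubmodule.mem_top y)

lemma derived_two_eq_bot_iff :
    derivedSeries F L 2 = ⊥ ↔
      ∀ x ∈ derivedSeries F L 1, ∀ y ∈ derivedSeries F L 1, ⁅x, y⁆ = (0 : L) := by
  rw [derivedSeries_def, derivedSeriesOfIdeal_succ]
  exact LieSubmodule.lie_eq_bot_iff _ _

lemma coe_ad_pow (S : LieSubalgebra F L) (u : S) (k : ℕ) (v : S) :
    ((((ad F S u) ^ k) v : S) : L) = ((ad F L (u : L)) ^ k) (v : L) := by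
  induction k with
  | zero => rfl
  | succ k ih =>
    rw [pow_succ', pow_succ']
    simp only [Module.End.mul_apply]
    rw [← ih]
    rfl

variable [FiniteDimensional F L]

lemma dichotomy (hA : IsAAlgebra F L)
    (hab : ∀ x ∈ derivedSeries F L 1, ∀ y ∈ derivedSeries F L 1, ⁅x, y⁆ = (0 : L))
    (W : LieIdeal F L) (hWne : W ≠ ⊥) (hWmono : ∀ I : LieIdeal F L, I ≠ ⊥ → W ≤ I)
    (b : L) :
    (∀ w ∈ derivedSeries F L 1, ⁅b, w⁆ = 0) ∨
      (∀ w ∈ derivedSeries F L 1, ⁅b, w⁆ = 0 → w = 0) := by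
  set adb := ad F L b with hadb
  set E0 : Submodule F L := (derivedSeries F L 1).toSubmodule ⊓ LinearMap.ker (adb ^ 2)
    with hE0def
  have hpow : ∀ w : L, (adb ^ 2) w = ⁅b, ⁅b, w⁆⁆ := by
    intro w
    simp [hadb, pow_succ, Module.End.mul_apply, ad_apply]
  have hE0mem : ∀ w : L, w ∈ E0 ↔ w ∈ derivedSeries F L 1 ∧ ⁅b, ⁅b, w⁆⁆ = 0 := by
    intro w
    rw [hE0def, Submodule.mem_inf, LinearMap.mem_ker, hpow]
    rfl
  have hbE0 : ∀ w ∈ E0, ⁅b, w⁆ ∈ E0 := by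
    intro w hw
    obtain ⟨hw1, hw2⟩ := (hE0mem w).mp hw
    exact (hE0mem _).mpr ⟨mem_derived_one b w, by rw [hw2, lie_zero]⟩
  have hVmem : ∀ x : L, x ∈ (F ∙ b) ⊔ E0 ↔ ∃ c : F, ∃ y ∈ E0, x = c • b + y := by
    intro x
    rw [Submodule.mem_sup]
    constructor
    · rintro ⟨z, hz, y, hy, rfl⟩
      obtain ⟨c, rfl⟩ := Submodule.mem_span_singleton.mp hz
      exact ⟨c, y, hy, rfl⟩
    · rintro ⟨c, y, hy, rfl⟩
      exact ⟨c • b, Submodule.mem_span_singleton.mpr ⟨c, rfl⟩, y, hy, rfl⟩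
  have hbr : ∀ (c₁ c₂ : F) (y₁ y₂ : L), y₁ ∈ E0 → y₂ ∈ E0 →
      ⁅c₁ • b + y₁, c₂ • b + y₂⁆ = c₁ • ⁅b, y₂⁆ - c₂ • ⁅b, y₁⁆ := by
    intro c₁ c₂ y₁ y₂ hy₁ hy₂
    have h1 : ⁅y₁, y₂⁆ = 0 := hab _ ((hE0mem _).mp hy₁).1 _ ((hE0mem _).mp hy₂).1
    have h2 : ⁅y₁, b⁆ = -⁅b, y₁⁆ := by rw [← lie_skew]
    simp only [add_lie, lie_add, smul_lie, lie_smul, lie_self, smul_zero, zero_add, h1, h2,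
      add_zero, smul_neg, smul_smul]
    abel
  let U : LieSubalgebra F L :=
    { toSubmodule := (F ∙ b) ⊔ E0
      lie_mem' := by
        intro x y hx hy
        obtain ⟨c₁, y₁, hy₁, rfl⟩ := (hVmem x).mp hx
        obtain ⟨c₂, y₂, hy₂, rfl⟩ := (hVmem y).mp hy
        rw [hbr c₁ c₂ y₁ y₂ hy₁ hy₂]
        exact Submodule.mem_sup_right
          (sub_mem (Submodule.smul_mem _ _ (hbE0 _ hy₂)) (Submodule.smul_mem _ _ (hbE0 _ hy₁))) }
  have hUmem : ∀ x : L, x ∈ U ↔ ∃ c : F, ∃ y ∈ E0, x = c • b + y := hVmem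
  haveI : FiniteDimensional F U := inferInstance
  haveI hUnilp : LieRing.IsNilpotent U := by
    rw [LieAlgebra.isNilpotent_iff_forall (R := F)]
    intro u
    refine ⟨3, LinearMap.ext fun v => ?_⟩
    rw [LinearMap.zero_apply]
    apply Subtype.ext
    rw [coe_ad_pow]
    show ((ad F L (u : L)) ^ 3) (v : L) = ((0 : U) : L)
    rw [ZeroMemClass.coe_zero]
    obtain ⟨c, xu, hxu, hu⟩ := (hUmem (u : L)).mp u.2
    obtain ⟨d, yv, hyv, hv⟩ := (hUmem (v : L)).mp v.2
    have hstep : ∀ w ∈ E0, ⁅(u : L), w⁆ = c • ⁅b, w⁆ := by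
      intro w hw
      rw [hu, add_lie, smul_lie, hab xu ((hE0mem _).mp hxu).1 w ((hE0mem _).mp hw).1, add_zero]
    set w₁ : L := ⁅(u : L), (v : L)⁆ with hw₁def
    have hw₁ : w₁ ∈ E0 := by
      rw [hw₁def, hu, hv, hbr c d xu yv hxu hyv]
      exact sub_mem (Submodule.smul_mem _ _ (hbE0 _ hyv)) (Submodule.smul_mem _ _ (hbE0 _ hxu))
    have e2 : ⁅(u : L), w₁⁆ = c • ⁅b, w₁⁆ := hstep w₁ hw₁
    have e3 : ⁅(u : L), ⁅b, w₁⁆⁆ = c • ⁅b, ⁅b, w₁⁆⁆ := hstep _ (hbE0 _ hw₁)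
    have e4 : ⁅b, ⁅b, w₁⁆⁆ = 0 := ((hE0mem w₁).mp hw₁).2
    have hiter : ((ad F L (u : L)) ^ 3) (v : L) = ⁅(u : L), ⁅(u : L), ⁅(u : L), (v : L)⁆⁆⁆ := by
      simp [pow_succ, Module.End.mul_apply, ad_apply]
    rw [hiter, ← hw₁def, e2, lie_smul, e3, e4]
    simp
  have habU : IsLieAbelian U := hA U hUnilp
  have hE0ker : ∀ w ∈ E0, ⁅b, w⁆ = 0 := by
    intro w hw
    have hbU : b ∈ U := (hUmem b).mpr ⟨1, 0, zero_mem _, by rw [one_smul, add_zero]⟩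
    have hwU : w ∈ U := (hUmem w).mpr ⟨0, w, hw, by rw [zero_smul, zero_add]⟩
    have h0 : ⁅(⟨b, hbU⟩ : U), (⟨w, hwU⟩ : U)⁆ = 0 := trivial_lie_zero _ _ _ _
    exact congrArg Subtype.val h0
  let K : LieIdeal F L :=
    { toSubmodule := (derivedSeries F L 1).toSubmodule ⊓ LinearMap.ker adb
      lie_mem := by
        intro x k hk
        obtain ⟨hk1, hk2⟩ := hk
        refine ⟨mem_derived_one x k, ?_⟩
        show adb ⁅x, k⁆ = 0
        have hbk : ⁅b, k⁆ = 0 := hk2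
        rw [hadb, ad_apply, leibniz_lie, hbk, lie_zero, add_zero,
          hab _ (mem_derived_one b x) _ hk1] }
  have hKmem : ∀ w : L, w ∈ K ↔ w ∈ derivedSeries F L 1 ∧ ⁅b, w⁆ = 0 := fun w => Iff.rfl
  by_cases hK : K = ⊥
  · right
    intro w hw hbw
    have hwK : w ∈ K := (hKmem w).mpr ⟨hw, hbw⟩
    rw [hK] at hwK
    exact hwK
  · left
    let I : LieIdeal F L :=
      { toSubmodule := Submodule.map adb (derivedSeries F L 1).toSubmodule
        lie_mem := by
          rintro x _ ⟨m, hm, rfl⟩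
          refine ⟨⁅x, m⁆, mem_derived_one x m, ?_⟩
          show adb ⁅x, m⁆ = ⁅x, adb m⁆
          rw [hadb, ad_apply, ad_apply, leibniz_lie, hab _ (mem_derived_one b x) _ hm,
            zero_add] }
    by_cases hI : I = ⊥
    · intro w hw
      have hmem : ⁅b, w⁆ ∈ I := ⟨w, hw, rfl⟩
      rw [hI] at hmem
      exact hmem
    · exfalso
      have hWK := hWmono K hK
      have hWI := hWmono I hI
      have hex : ∃ w ∈ W, w ≠ 0 := by
        by_contra hcon
        push_neg at hcon
        exact hWne ((LieSubmodule.eq_bot_iff W).mpr hcon)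
      obtain ⟨w, hwW, hwne⟩ := hex
      obtain ⟨hw1, hw2⟩ := (hKmem w).mp (hWK hwW)
      obtain ⟨m, hm, hmw⟩ := hWI hwW
      have hmE0 : m ∈ E0 := by
        refine (hE0mem m).mpr ⟨hm, ?_⟩
        have : (adb m : L) = w := hmw
        rw [show ⁅b, m⁆ = adb m from rfl, this, hw2]
      have h0 : ⁅b, m⁆ = 0 := hE0ker m hmE0
      apply hwne
      rw [← hmw]
      exact h0
end Aux

section Fwd
variable {F L : Type*} [Field F] [LieRing L] [LieAlgebra F L] [FiniteDimensional F L]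

lemma map_ad_derived (b : L)
    (hbinj : ∀ w ∈ derivedSeries F L 1, ⁅b, w⁆ = 0 → w = 0) :
    Submodule.map (ad F L b) (derivedSeries F L 1).toSubmodule =
      (derivedSeries F L 1).toSubmodule := by
  set M := (derivedSeries F L 1).toSubmodule with hM
  have hpres : ∀ w ∈ M, (ad F L b) w ∈ M := fun w hw => mem_derived_one b w
  apply le_antisymm
  · rintro _ ⟨m, hm, rfl⟩
    exact mem_derived_one b m
  · set e : M →ₗ[F] M := (ad F L b).restrict hpres with he
    have heinj : Function.Injective e := by
      intro x y hxy
      have h2 : (ad F L b) ((x - y : M) : L) = 0 := by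
        have h1 : ((e (x - y) : M) : L) = 0 := by rw [map_sub, hxy, sub_self]; rfl
        simpa [he, LinearMap.restrict_apply] using h1
      have hx0 : ((x - y : M) : L) = 0 := hbinj _ (x - y).2 h2
      exact sub_eq_zero.mp (Subtype.ext hx0)
    have hesurj : Function.Surjective e := LinearMap.injective_iff_surjective.mp heinj
    intro m hm
    obtain ⟨w, hw⟩ := hesurj ⟨m, hm⟩
    refine ⟨w, w.2, ?_⟩
    have := congrArg (Subtype.val) hw
    simpa [he, LinearMap.restrict_apply] using this

lemma exists_noncentral (hA : IsAAlgebra F L) (hM : derivedSeries F L 1 ≠ ⊥) :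
    ∃ b₀ : L, ¬ ∀ w ∈ derivedSeries F L 1, ⁅b₀, w⁆ = 0 := by
  by_contra hall
  push_neg at hall
  have hlcs : LieModule.lowerCentralSeries F L L 1 = derivedSeries F L 1 := by
    rw [LieModule.lowerCentralSeries_succ, LieModule.lowerCentralSeries_zero, derivedSeries_def,
      derivedSeriesOfIdeal_succ, derivedSeriesOfIdeal_zero]
  haveI : LieRing.IsNilpotent L := by
    refine (LieModule.isNilpotent_iff F L L).mpr ?_
    refine ⟨2, ?_⟩
    show LieModule.lowerCentralSeries F L L 2 = ⊥
    rw [show (2 : ℕ) = 1 + 1 from rfl, LieModule.lowerCentralSeries_succ, hlcs,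
      LieSubmodule.lie_eq_bot_iff]
    intro x _ m hm
    exact hall x m hm
  have habT : IsLieAbelian (⊤ : LieSubalgebra F L) := hA ⊤ inferInstance
  apply hM
  rw [derivedSeries_def, derivedSeriesOfIdeal_succ, derivedSeriesOfIdeal_zero,
    LieSubmodule.lie_eq_bot_iff]
  intro x _ m _
  have h0 : ⁅(⟨x, LieSubalgebra.mem_top x⟩ : (⊤ : LieSubalgebra F L)),
      (⟨m, LieSubalgebra.mem_top m⟩ : (⊤ : LieSubalgebra F L))⁆ = 0 := trivial_lie_zero _ _ _ _
  exact congrArg Subtype.val h0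

lemma backward_dir (h2 : derivedSeries F L 2 = ⊥) (B : LieSubalgebra F L)
    (hSup : (derivedSeries F L 1).toSubmodule ⊔ B.toSubmodule = ⊤)
    (hInv : ∀ b ∈ B, b ≠ 0 →
      Submodule.map (ad F L b) (derivedSeries F L 1).toSubmodule =
        (derivedSeries F L 1).toSubmodule) :
    LieRing.IsNilpotent (derivedSeries F L 1) ∧ IsAAlgebra F L := by
  have hab := derived_two_eq_bot_iff.mp h2
  constructor
  · haveI : IsLieAbelian (derivedSeries F L 1) := (abelian_iff_derived_succ_eq_bot ⊤ 1).mpr h2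
    infer_instance
  intro U hU
  constructor
  intro x y
  by_cases hsub : ∀ w : U, (w : L) ∈ derivedSeries F L 1
  · apply Subtype.ext
    exact hab _ (hsub x) _ (hsub y)
  · push_neg at hsub
    obtain ⟨u0, hu0⟩ := hsub
    have hmem : (u0 : L) ∈ (derivedSeries F L 1).toSubmodule ⊔ B.toSubmodule := by
      rw [hSup]; trivial
    obtain ⟨a, ha, b, hb, hsum⟩ := Submodule.mem_sup.mp hmem
    have hbne : b ≠ 0 := by
      rintro rfl
      exact hu0 (by rw [← hsum, add_zero]; exact ha)
    have hmap := hInv b hb hbne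
    set M := (derivedSeries F L 1).toSubmodule with hMdef
    have hpres : ∀ w ∈ M, (ad F L b) w ∈ M := fun w hw => mem_derived_one b w
    set e : M →ₗ[F] M := (ad F L b).restrict hpres with he
    have hesurj : Function.Surjective e := by
      intro m
      have hmm : (m : L) ∈ Submodule.map (ad F L b) M := by rw [hmap]; exact m.2
      obtain ⟨w, hw, hww⟩ := hmm
      exact ⟨⟨w, hw⟩, Subtype.ext hww⟩
    have heinj : Function.Injective e := LinearMap.injective_iff_surjective.mpr hesurj
    -- key: ad u0 agrees with ad b on M
    have hagree : ∀ w ∈ M, ⁅(u0 : L), w⁆ = ⁅b, w⁆ := by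
      intro w hw
      rw [← hsum, add_lie, hab a ha w hw, zero_add]
    -- iterates
    have hiter : ∀ (k : ℕ) (z : M),
        ((ad F L (u0 : L)) ^ k) (z : L) = (((e ^ k) z : M) : L) := by
      intro k
      induction k with
      | zero => intro z; rfl
      | succ k ih =>
        intro z
        rw [pow_succ, pow_succ]
        simp only [Module.End.mul_apply]
        have h1 : (ad F L (u0 : L)) (z : L) = ((e z : M) : L) := by
          rw [he, LinearMap.restrict_apply]
          exact hagree _ z.2
        rw [h1]
        exact ih (e z)
    haveI : LieModule.IsNilpotent U U := hU
    obtain ⟨n, hn⟩ := LieModule.isNilpotent_toEnd_of_isNilpotent F U U u0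
    set w : U := ⁅x, y⁆ with hwdef
    have hwM : (w : L) ∈ M := mem_derived_one (x : L) (y : L)
    have hz : ((ad F L (u0 : L)) ^ n) (w : L) = 0 := by
      rw [← coe_ad_pow U u0 n w]
      have : ((LieModule.toEnd F U U u0) ^ n) w = 0 := by rw [hn]; rfl
      rw [show ((ad F U u0) ^ n) w = ((LieModule.toEnd F U U u0) ^ n) w from rfl, this]
      rfl
    have : (((e ^ n) ⟨(w : L), hwM⟩ : M) : L) = 0 := by rw [← hiter n ⟨(w : L), hwM⟩]; exact hz
    have h0 : (e ^ n) ⟨(w : L), hwM⟩ = 0 := Subtype.ext this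
    have hinjn : Function.Injective (e ^ n) := by
      rw [Module.End.coe_pow]
      exact Function.Injective.iterate heinj n
    have : (⟨(w : L), hwM⟩ : M) = 0 := hinjn (by rw [h0]; exact (map_zero _).symm)
    have hcoe : (w : L) = 0 := congrArg Subtype.val this
    exact Subtype.ext hcoe

end Fwd

theorem monolithic_strongly_solvable_A_iff (F L : Type*) [Field F] [LieRing L] [LieAlgebra F L]
    [FiniteDimensional F L]
    (W : LieIdeal F L) (hWne : W ≠ ⊥)
    (hWmono : ∀ I : LieIdeal F L, I ≠ ⊥ → W ≤ I) :
    (LieRing.IsNilpotent (LieAlgebra.derivedSeries F L 1) ∧ IsAAlgebra F L) ↔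
      (LieAlgebra.derivedSeries F L 2 = ⊥ ∧
        ∃ B : LieSubalgebra F L,
          (LieAlgebra.derivedSeries F L 1).toSubmodule ⊓ B.toSubmodule = ⊥ ∧
          (LieAlgebra.derivedSeries F L 1).toSubmodule ⊔ B.toSubmodule = ⊤ ∧
          ∀ b ∈ B, b ≠ 0 →
            Submodule.map (LieAlgebra.ad F L b)
                (LieAlgebra.derivedSeries F L 1).toSubmodule =
              (LieAlgebra.derivedSeries F L 1).toSubmodule) := by
  constructor
  · rintro ⟨h1, hA⟩
    have habelian : IsLieAbelian ((derivedSeries F L 1 : LieIdeal F L) : LieSubalgebra F L) :=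
      hA _ h1
    have h2 : derivedSeries F L 2 = ⊥ := (abelian_iff_derived_succ_eq_bot ⊤ 1).mp habelian
    refine ⟨h2, ?_⟩
    have hab := derived_two_eq_bot_iff.mp h2
    by_cases hM : derivedSeries F L 1 = ⊥
    · refine ⟨⊤, ?_, ?_, ?_⟩
      · rw [hM]
        simp
      · rw [hM]
        simp
      · intro b _ _
        rw [hM]
        simp
    · obtain ⟨b₀, hb₀⟩ := exists_noncentral hA hM
      have hinj := (dichotomy hA hab W hWne hWmono b₀).resolve_left hb₀
      have hmapb₀ := map_ad_derived b₀ hinj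
      let B : LieSubalgebra F L :=
        { toSubmodule := LinearMap.ker (ad F L b₀)
          lie_mem' := by
            intro x y hx hy
            have hx' : ⁅b₀, x⁆ = 0 := hx
            have hy' : ⁅b₀, y⁆ = 0 := hy
            show ad F L b₀ ⁅x, y⁆ = 0
            rw [ad_apply, leibniz_lie, hx', hy', zero_lie, lie_zero, add_zero] }
      have hBmem : ∀ x : L, x ∈ B ↔ ⁅b₀, x⁆ = 0 := fun x => Iff.rfl
      refine ⟨B, ?_, ?_, ?_⟩
      · rw [Submodule.eq_bot_iff]
        rintro w hw
        rw [Submodule.mem_inf] at hw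
        exact hinj w hw.1 hw.2
      · rw [Submodule.eq_top_iff']
        intro x
        have hbx : ⁅b₀, x⁆ ∈ Submodule.map (ad F L b₀) (derivedSeries F L 1).toSubmodule := by
          rw [hmapb₀]
          exact mem_derived_one b₀ x
        obtain ⟨m, hm, hmm⟩ := hbx
        refine Submodule.mem_sup.mpr ⟨m, hm, x - m, ?_, by abel⟩
        show ad F L b₀ (x - m) = 0
        rw [map_sub, hmm, ad_apply, sub_self]
      · intro b hbB hbne
        apply map_ad_derived
        refine (dichotomy hA hab W hWne hWmono b).resolve_left ?_
        intro hcent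
        let J : LieIdeal F L :=
          { carrier := {z : L | (∀ w ∈ derivedSeries F L 1, ⁅z, w⁆ = 0) ∧ ⁅b₀, z⁆ = 0}
            add_mem' := by
              rintro z₁ z₂ ⟨h₁, h₁'⟩ ⟨h₂, h₂'⟩
              refine ⟨fun w hw => by rw [add_lie, h₁ w hw, h₂ w hw, add_zero], ?_⟩
              rw [lie_add, h₁', h₂', add_zero]
            zero_mem' := ⟨fun w _ => zero_lie w, lie_zero b₀⟩
            smul_mem' := by
              rintro c z ⟨h₁, h₂⟩
              refine ⟨fun w hw => by rw [smul_lie, h₁ w hw, smul_zero], ?_⟩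
              rw [lie_smul, h₂, smul_zero]
            lie_mem := by
              rintro x z ⟨h₁, h₂⟩
              constructor
              · intro w hw
                rw [lie_lie, h₁ w hw, h₁ ⁅x, w⁆ (mem_derived_one x w), lie_zero, sub_zero]
              · rw [leibniz_lie, h₂, lie_zero, add_zero, ← lie_skew,
                  h₁ ⁅b₀, x⁆ (mem_derived_one b₀ x), neg_zero] }
        have hbJ : b ∈ J := ⟨hcent, hbB⟩
        have hJne : J ≠ ⊥ := by
          intro h
          rw [h] at hbJ
          exact hbne hbJ
        have hex : ∃ w ∈ W, w ≠ 0 := by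
          by_contra hcon
          push_neg at hcon
          exact hWne ((LieSubmodule.eq_bot_iff W).mpr hcon)
        obtain ⟨w, hwW, hwne⟩ := hex
        have hwJ : w ∈ J := hWmono J hJne hwW
        have hwD : w ∈ derivedSeries F L 1 := hWmono _ hM hwW
        exact hwne (hinj w hwD hwJ.2)
  · rintro ⟨h2, B, -, hSup, hInv⟩
    exact backward_dir h2 B hSup hInv
end
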